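/- arXiv:1904.06908 — 4 statements merged into one kernel-verified Lean document; each statement's English description precedes it below -/
import Mathlib

section
/- There exists an absolute constant C₂ > 0 such that for any a, z in the unit disc with ρ(a,z) ≤ 1/2 (where a ≠ 0), one has ∫_{I(a)} (1−|z|²)/|ξ−z|² |dξ| ≥ C₂ · (1−|a|²)(1−|z|²)/|1−conj(a)z|², where I(a) = {ξ ∈ ∂𝔻 : |ξ − a/|a|| ≤ 1−|a|} is the Privalov shadow of a. -/
open Complex

/-- Pseudohyperbolic distance on the unit disc. -/
noncomputable def pd (a z : ℂ) : ℝ :=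
  ‖a - z‖ / ‖1 - (starRingEnd ℂ) a * z‖

/-- The integral of the Poisson kernel at `z` over the Privalov shadow of `a`,
the circle being parametrized by arclength. -/
noncomputable def shadowInt (a z : ℂ) : ℝ :=
  ∫ θ in (0:ℝ)..(2 * Real.pi),
    Set.indicator
      {θ : ℝ | ‖Complex.exp (θ * Complex.I) - a / (‖a‖ : ℂ)‖
        ≤ 1 - ‖a‖}
      (fun θ => (1 - ‖z‖ ^ 2) / ‖Complex.exp (θ * Complex.I) - z‖ ^ 2) θ

private theorem chord_aux (s θ : ℝ) (h : |θ - s| ≤ 1) :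
    ‖Complex.exp (θ * I) - Complex.exp (s * I)‖ ≤ 2 * |θ - s| := by
  have e1 : Complex.exp (θ * I) - Complex.exp (s * I)
      = Complex.exp (s * I) * (Complex.exp (((θ - s : ℝ) : ℂ) * I) - 1) := by
    rw [mul_sub, ← Complex.exp_add, mul_one]; push_cast; ring_nf
  rw [e1, norm_mul, Complex.norm_exp_ofReal_mul_I, one_mul]
  have habs : ‖((θ - s : ℝ) : ℂ) * I‖ = |θ - s| := by
    rw [norm_mul, Complex.norm_I, Complex.norm_real, Real.norm_eq_abs, mul_one]
  have h2 : ‖((θ - s : ℝ) : ℂ) * I‖ ≤ 1 := by rw [habs]; exact h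
  calc ‖Complex.exp (((θ - s : ℝ) : ℂ) * I) - 1‖
      ≤ 2 * ‖((θ - s : ℝ) : ℂ) * I‖ := Complex.norm_exp_sub_one_le h2
    _ = 2 * |θ - s| := by rw [habs]

set_option maxHeartbeats 1000000 in
theorem stmt_6 :
    ∃ C₂ : ℝ, 0 < C₂ ∧ ∀ a z : ℂ, a ∈ Metric.ball (0:ℂ) 1 → z ∈ Metric.ball (0:ℂ) 1 →
      a ≠ 0 → pd a z ≤ 1 / 2 →
      C₂ * ((1 - ‖a‖ ^ 2) * (1 - ‖z‖ ^ 2) /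
          ‖1 - (starRingEnd ℂ) a * z‖ ^ 2)
        ≤ shadowInt a z := by
  refine ⟨1/25, by norm_num, ?_⟩
  intro a z ha hz ha0 hpd
  rw [shadowInt]
  have hA1 : ‖a‖ < 1 := by
    simpa [Complex.dist_eq] using ha
  have hZ1 : ‖z‖ < 1 := by
    simpa [Complex.dist_eq] using hz
  set A := ‖a‖ with hA
  set Z := ‖z‖ with hZ
  set D := ‖1 - (starRingEnd ℂ) a * z‖ with hD
  have hA0 : 0 < A := norm_pos_iff.mpr ha0
  have hZ0 : 0 ≤ Z := norm_nonneg z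
  -- basic bounds on D
  have hD1 : 1 - A * Z ≤ D := by
    have h1 : ‖(starRingEnd ℂ) a * z‖ = A * Z := by
      rw [norm_mul, Complex.norm_conj]
    have h2 := norm_sub_norm_le (1:ℂ) ((starRingEnd ℂ) a * z)
    simpa [h1] using h2
  have hDpos : 0 < D := by nlinarith
  have hAD : 1 - A ≤ D := by nlinarith
  -- distance bound from pseudohyperbolic hypothesis
  have haz : ‖a - z‖ ≤ D / 2 := by
    have h3 : ‖a - z‖ / D ≤ 1 / 2 := hpd
    rw [div_le_iff₀ hDpos] at h3
    linarith
  -- the unimodular point u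
  set u : ℂ := a / (A : ℂ) with hu
  have hu1 : ‖u‖ = 1 := by
    rw [hu, norm_div, Complex.norm_real, Real.norm_eq_abs, abs_of_pos hA0, ← hA, div_self hA0.ne']
  have hAne : (A : ℂ) ≠ 0 := by
    simpa using hA0.ne'
  have hau : a = (A : ℂ) * u := by
    rw [hu]; exact (div_mul_cancel₀ a hAne).symm |>.trans (mul_comm _ _)
  have hua : ‖u - a‖ = 1 - A := by
    have e2 : u - a = u * (1 - (A : ℂ)) := by rw [hau]; ring
    rw [e2, norm_mul, hu1, one_mul,
      show (1 - (A:ℂ)) = ((1 - A : ℝ) : ℂ) by push_cast; ring, Complex.norm_real, Real.norm_eq_abs]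
    exact abs_of_nonneg (by linarith)
  clear_value A Z D u
  -- the shadow set and the kernel
  set S : Set ℝ := {θ : ℝ | ‖Complex.exp (θ * Complex.I) - u‖ ≤ 1 - A}
    with hSdef
  set h : ℝ → ℝ := fun θ => (1 - Z ^ 2) / ‖Complex.exp (θ * Complex.I) - z‖ ^ 2
    with hhdef
  have hSiff : ∀ θ : ℝ, θ ∈ S ↔ ‖Complex.exp (θ * Complex.I) - u‖ ≤ 1 - A := by
    intro θ; exact Iff.rfl
  have happ : ∀ θ : ℝ,
      h θ = (1 - Z ^ 2) / ‖Complex.exp (θ * Complex.I) - z‖ ^ 2 := by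
    intro θ; rfl
  -- pointwise bound on the shadow
  have hbound : ∀ θ ∈ S, ‖Complex.exp (θ * I) - z‖ ≤ 5/2 * D := by
    intro θ hθ
    have h1 : ‖Complex.exp (θ * I) - u‖ ≤ 1 - A := (hSiff θ).mp hθ
    have t1 := norm_sub_le_norm_sub_add_norm_sub (Complex.exp (θ * I)) u z
    have t2 := norm_sub_le_norm_sub_add_norm_sub u a z
    linarith
  -- choose the subinterval [c, d] inside the shadow
  have hpi := Real.pi_gt_three
  set t := Complex.arg u with ht
  have ht1 : -Real.pi < t := Complex.neg_pi_lt_arg u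
  have ht2 : t ≤ Real.pi := Complex.arg_le_pi u
  have hexp_t : Complex.exp (t * I) = u := by
    have h4 := Complex.norm_mul_exp_arg_mul_I u
    rwa [hu1, Complex.ofReal_one, one_mul] at h4
  set s : ℝ := if 0 ≤ t then t else t + 2 * Real.pi with hs
  have hexp_s : Complex.exp (s * I) = u := by
    rw [hs]; split_ifs with hcase
    · exact hexp_t
    · push_cast
      rw [add_mul, Complex.exp_add, Complex.exp_two_pi_mul_I, mul_one]
      exact hexp_t
  have hs0 : 0 ≤ s := by
    rw [hs]; split_ifs with hcase
    · exact hcase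
    · push_neg at hcase; linarith
  have hs2 : s ≤ 2 * Real.pi := by
    rw [hs]; split_ifs with hcase
    · linarith
    · push_neg at hcase; linarith
  set δ : ℝ := (1 - A) / 2 with hδ
  clear_value t s
  have hδpos : 0 < δ := by rw [hδ]; linarith
  have hδhalf : δ ≤ 1/2 := by rw [hδ]; nlinarith [hA0]
  obtain ⟨c, d, h0c, hcd, hd2, hlen, hdist⟩ :
      ∃ c d : ℝ, 0 ≤ c ∧ c ≤ d ∧ d ≤ 2 * Real.pi ∧
        d - c = δ ∧ ∀ θ ∈ Set.Icc c d, |θ - s| ≤ δ := by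
    rcases le_or_gt s Real.pi with hcase | hcase
    · refine ⟨s, s + δ, hs0, by linarith, by linarith, by ring, ?_⟩
      intro θ hθ
      rw [abs_le]; constructor <;> [linarith [hθ.1]; linarith [hθ.2]]
    · refine ⟨s - δ, s, by linarith, by linarith, hs2, by ring, ?_⟩
      intro θ hθ
      rw [abs_le]; constructor <;> [linarith [hθ.1]; linarith [hθ.2]]
  have hmemS : ∀ θ ∈ Set.Icc c d, θ ∈ S := by
    intro θ hθ
    rw [hSiff θ]
    have h1 : |θ - s| ≤ δ := hdist θ hθ
    have h2 : |θ - s| ≤ 1 := by linarith [hδhalf]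
    calc ‖Complex.exp (θ * I) - u‖
        = ‖Complex.exp (θ * I) - Complex.exp (s * I)‖ := by rw [hexp_s]
      _ ≤ 2 * |θ - s| := chord_aux s θ h2
      _ ≤ 2 * δ := by linarith
      _ = 1 - A := by rw [hδ]; ring
  -- positivity / continuity of the kernel
  have hden_pos : ∀ θ : ℝ, 0 < ‖Complex.exp (θ * I) - z‖ := by
    intro θ
    have h1 : ‖Complex.exp (θ * I)‖ = 1 := Complex.norm_exp_ofReal_mul_I θ
    have h2 : Complex.exp (θ * I) ≠ z := by
      intro hEq; rw [hEq, ← hZ] at h1; linarith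
    simpa [norm_pos_iff, sub_ne_zero] using h2
  have hZ2 : 0 < 1 - Z ^ 2 := by nlinarith
  have hh_nonneg : ∀ θ, 0 ≤ h θ := by
    intro θ
    rw [happ θ]
    exact div_nonneg (by nlinarith) (by positivity)
  have hcont1 : Continuous fun θ : ℝ => ‖Complex.exp (θ * Complex.I) - z‖ :=
    continuous_norm.comp
      ((Complex.continuous_exp.comp (Complex.continuous_ofReal.mul continuous_const)).sub
        continuous_const)
  have hh_cont : Continuous h := by
    rw [hhdef]
    exact continuous_const.div (hcont1.pow 2) fun θ => pow_ne_zero 2 (hden_pos θ).ne'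
  have hcont2 : Continuous fun θ : ℝ => ‖Complex.exp (θ * Complex.I) - u‖ :=
    continuous_norm.comp
      ((Complex.continuous_exp.comp (Complex.continuous_ofReal.mul continuous_const)).sub
        continuous_const)
  have hSmeas : MeasurableSet S := by
    rw [hSdef]
    exact measurableSet_le hcont2.measurable measurable_const
  -- integrability
  have hg_int : ∀ x y : ℝ, IntervalIntegrable (S.indicator h) MeasureTheory.volume x y := by
    intro x y
    rw [intervalIntegrable_iff]
    exact (hh_cont.integrableOn_uIoc).indicator hSmeas
  -- lower bound on [c, d]
  set m : ℝ := (1 - Z ^ 2) / (5/2 * D) ^ 2 with hm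
  clear_value δ
  have hm_le : ∀ θ ∈ Set.Icc c d, m ≤ S.indicator h θ := by
    intro θ hθ
    rw [Set.indicator_of_mem (hmemS θ hθ), hm, happ θ]
    have h1 := hbound θ (hmemS θ hθ)
    have h2 := hden_pos θ
    have h3 : ‖Complex.exp (θ * Complex.I) - z‖ ^ 2 ≤ (5/2 * D) ^ 2 := by
      nlinarith
    exact div_le_div_of_nonneg_left hZ2.le (by positivity) h3
  have step1 : m * δ ≤ ∫ θ in c..d, S.indicator h θ := by
    have h5 := intervalIntegral.integral_mono_on hcd
      (intervalIntegrable_const (c := m)) (hg_int c d) hm_le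
    rw [intervalIntegral.integral_const, smul_eq_mul, hlen, mul_comm] at h5
    exact h5
  have step2 : (∫ θ in c..d, S.indicator h θ)
      ≤ ∫ θ in (0:ℝ)..(2*Real.pi), S.indicator h θ := by
    apply intervalIntegral.integral_mono_interval h0c hcd hd2
    · filter_upwards with θ
      exact Set.indicator_nonneg (fun x _ => hh_nonneg x) θ
    · exact hg_int 0 (2*Real.pi)
  refine le_trans ?_ (step1.trans step2)
  -- final arithmetic
  rw [hm, hδ]
  have hD2 : (0:ℝ) < D ^ 2 := by positivity
  have lhs_eq : 1/25 * ((1 - A^2) * (1 - Z^2) / D^2)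
      = (1/25 * ((1 - A^2) * (1 - Z^2))) / D^2 := by ring
  have gen : ∀ x y w : ℝ, w ≠ 0 → x / (5/2 * w) ^ 2 * (y / 2) = (2/25 * (y * x)) / w ^ 2 := by
    intro x y w hw; field_simp; ring
  have expand : (1 - Z ^ 2) / (5/2 * D) ^ 2 * ((1 - A) / 2)
      = (2/25 * ((1 - A) * (1 - Z ^ 2))) / D ^ 2 := gen _ _ _ hDpos.ne'
  rw [lhs_eq, expand]
  apply (div_le_div_iff_of_pos_right hD2).mpr
  nlinarith [mul_nonneg hZ2.le (sq_nonneg (1 - A))]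
end

section
/- Let Λ be a Blaschke sequence and let A be a sequence of points in the unit disc such that there exist γ ∈ (0,1) and a natural number k with: for each a ∈ A there is λ(a) ∈ Λ with ρ(a, λ(a)) ≤ γ, and #{a ∈ A : λ(a) = λ} ≤ k for every λ ∈ Λ. Then A is a Blaschke sequence, and for every δ > 0 there is a constant C = C(γ, δ, k) > 0 such that for all z ∈ 𝔻: Σ_{a ∈ A, ρ(a,z) > δ} log(|1−conj(a)z|/|a−z|) ≤ C·H_Λ(z). -/
open Complex MeasureTheory

set_option maxHeartbeats 1000000

/-- The harmonic function `H_Λ` associated to a Blaschke sequence. -/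
noncomputable def HΛ (Λ : ℕ → ℂ) (z : ℂ) : ℝ := ∑' k, shadowInt (Λ k) z

noncomputable def pker (z : ℂ) (θ : ℝ) : ℝ :=
  (1 - ‖z‖ ^ 2) / ‖Complex.exp (θ * Complex.I) - z‖ ^ 2

def shSet (lam : ℂ) : Set ℝ :=
  {θ : ℝ | ‖Complex.exp (θ * Complex.I) - lam / (‖lam‖ : ℂ)‖
    ≤ 1 - ‖lam‖}

lemma sq_identity (a z : ℂ) :
    ‖1 - (starRingEnd ℂ) a * z‖ ^ 2
      = ‖a - z‖ ^ 2 + (1 - ‖a‖ ^ 2) * (1 - ‖z‖ ^ 2) := by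
  simp only [Complex.sq_norm, Complex.normSq_apply, Complex.sub_re, Complex.sub_im,
    Complex.mul_re, Complex.mul_im, Complex.one_re, Complex.one_im, Complex.conj_re,
    Complex.conj_im]
  ring

lemma one_sub_le_denom {a : ℂ} (z : ℂ) (hz : ‖z‖ ≤ 1) :
    1 - ‖a‖ ≤ ‖1 - (starRingEnd ℂ) a * z‖ := by
  have h1 : ‖(starRingEnd ℂ) a * z‖ ≤ ‖a‖ := by
    rw [norm_mul, Complex.norm_conj]
    calc ‖a‖ * ‖z‖ ≤ ‖a‖ * 1 :=
          mul_le_mul_of_nonneg_left hz (norm_nonneg a)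
      _ = ‖a‖ := mul_one _
  have h2 := norm_sub_norm_le (1 : ℂ) ((starRingEnd ℂ) a * z)
  simp only [norm_one] at h2
  linarith

lemma denom_pos {a : ℂ} (z : ℂ) (ha : ‖a‖ < 1) (hz : ‖z‖ ≤ 1) :
    0 < ‖1 - (starRingEnd ℂ) a * z‖ :=
  lt_of_lt_of_le (by linarith) (one_sub_le_denom z hz)

lemma num_le_denom {a z : ℂ} (ha : ‖a‖ ≤ 1) (hz : ‖z‖ ≤ 1) :
    ‖a - z‖ ≤ ‖1 - (starRingEnd ℂ) a * z‖ := by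
  have h := sq_identity a z
  have h1 : 0 ≤ (1 - ‖a‖ ^ 2) * (1 - ‖z‖ ^ 2) := by
    apply mul_nonneg <;> nlinarith [norm_nonneg a, norm_nonneg z]
  nlinarith [norm_nonneg (a - z), norm_nonneg (1 - (starRingEnd ℂ) a * z)]

lemma pd_le_one {a z : ℂ} (ha : ‖a‖ < 1) (hz : ‖z‖ ≤ 1) :
    pd a z ≤ 1 :=
  (div_le_one (denom_pos z ha hz)).2 (num_le_denom ha.le hz)

lemma one_sub_pd_sq {a z : ℂ} (ha : ‖a‖ < 1) (hz : ‖z‖ < 1) :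
    1 - pd a z ^ 2
      = (1 - ‖a‖ ^ 2) * (1 - ‖z‖ ^ 2)
        / ‖1 - (starRingEnd ℂ) a * z‖ ^ 2 := by
  have hd := denom_pos z ha hz.le
  have h := sq_identity a z
  rw [pd, div_pow, eq_div_iff (by positivity)]
  rw [sub_mul, div_mul_cancel₀ _ (by positivity)]
  linarith

lemma log_bound {δ ρ : ℝ} (hδ : 0 < δ) (h1 : δ < ρ) (h2 : ρ ≤ 1) :
    Real.log (1 / ρ) ≤ (1 - ρ ^ 2) / δ := by
  have hρ : 0 < ρ := hδ.trans h1
  have hl := Real.log_le_sub_one_of_pos (show (0:ℝ) < 1 / ρ by positivity)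
  have h3 : 1 / ρ - 1 ≤ (1 - ρ ^ 2) / δ := by
    rw [div_sub' hρ.ne', div_le_div_iff₀ hρ hδ]
    nlinarith
  linarith

lemma close_est {a lam z : ℂ} (ha : ‖a‖ < 1) (hl : ‖lam‖ < 1)
    (hz : ‖z‖ ≤ 1) {γ : ℝ} (hγ0 : 0 ≤ γ) (hγ1 : γ < 1) (h : pd a lam ≤ γ) :
    1 - ‖a‖ ≤ 4 / (1 - γ ^ 2) * (1 - ‖lam‖) ∧
    ‖1 - (starRingEnd ℂ) lam * z‖
      ≤ (1 + 4 / (1 - γ ^ 2)) * ‖1 - (starRingEnd ℂ) a * z‖ := by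
  have hγsq : 0 < 1 - γ ^ 2 := by nlinarith
  set D := ‖1 - (starRingEnd ℂ) a * lam‖ with hD
  have hd : 0 < D := denom_pos lam ha hl.le
  have hsub : ‖a - lam‖ ≤ γ * D := by
    have := (div_le_iff₀ hd).1 h
    linarith
  have hkey : (1 - γ ^ 2) * D ^ 2 ≤ (1 - ‖a‖ ^ 2) * (1 - ‖lam‖ ^ 2) := by
    have h2 : ‖a - lam‖ ^ 2 ≤ γ ^ 2 * D ^ 2 := by
      nlinarith [norm_nonneg (a - lam)]
    have := sq_identity a lam
    nlinarith
  have hDa : 1 - ‖a‖ ≤ D := one_sub_le_denom lam hl.le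
  have hDl : 1 - ‖lam‖ ≤ D := by
    have : 1 - ‖lam‖ ≤ ‖1 - (starRingEnd ℂ) lam * a‖ :=
      one_sub_le_denom a ha.le
    calc 1 - ‖lam‖ ≤ ‖1 - (starRingEnd ℂ) lam * a‖ := this
      _ = D := by
        rw [hD, ← Complex.norm_conj (1 - (starRingEnd ℂ) a * lam)]
        congr 1
        simp [map_sub, map_mul, mul_comm]
  have hA0 : 0 < 1 - ‖a‖ := by linarith
  have hL0 : 0 < 1 - ‖lam‖ := by linarith
  have habs_a : 0 ≤ ‖a‖ := norm_nonneg a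
  have habs_l : 0 ≤ ‖lam‖ := norm_nonneg lam
  have hprod : (1 - ‖a‖ ^ 2) * (1 - ‖lam‖ ^ 2)
      ≤ 4 * ((1 - ‖a‖) * (1 - ‖lam‖)) := by
    nlinarith [mul_nonneg (mul_nonneg hA0.le hL0.le)
      (show (0:ℝ) ≤ 4 - (1 + ‖a‖) * (1 + ‖lam‖) by nlinarith)]
  have hsqa : (1 - ‖a‖) ^ 2 ≤ D ^ 2 := by nlinarith
  have hsql : (1 - ‖lam‖) ^ 2 ≤ D ^ 2 := by nlinarith
  -- part (i)
  have hi : 1 - ‖a‖ ≤ 4 / (1 - γ ^ 2) * (1 - ‖lam‖) := by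
    rw [div_mul_eq_mul_div, le_div_iff₀ hγsq]
    nlinarith [hsqa, hkey, hprod, mul_pos hγsq hA0]
  have hi' : 1 - ‖lam‖ ≤ 4 / (1 - γ ^ 2) * (1 - ‖a‖) := by
    rw [div_mul_eq_mul_div, le_div_iff₀ hγsq]
    nlinarith [hsql, hkey, hprod, mul_pos hγsq hL0]
  refine ⟨hi, ?_⟩
  -- D ≤ c * (1 - |a|) where c = 4/(1-γ²)
  set c := 4 / (1 - γ ^ 2) with hc
  have hc0 : 0 < c := by positivity
  have hDle : D ≤ c * (1 - ‖a‖) := by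
    have h1 : (1 - γ ^ 2) * D ^ 2 ≤ 4 * (1 - ‖a‖) * (1 - ‖lam‖) := by
      nlinarith [hkey, hprod]
    have h2 : (1 - γ ^ 2) * D ^ 2 ≤ 4 * (1 - ‖a‖) * (c * (1 - ‖a‖)) := by
      calc (1 - γ ^ 2) * D ^ 2 ≤ 4 * (1 - ‖a‖) * (1 - ‖lam‖) := h1
        _ ≤ 4 * (1 - ‖a‖) * (c * (1 - ‖a‖)) := by
            apply mul_le_mul_of_nonneg_left _ (by positivity)
            calc 1 - ‖lam‖ ≤ 4 / (1 - γ ^ 2) * (1 - ‖a‖) := hi'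
              _ = c * (1 - ‖a‖) := by rw [hc]
    -- (1-γ²) D² ≤ 4 c (1-|a|)² and c(1-γ²) = 4 so D² ≤ c²(1-|a|)²
    have h4 : c * (1 - γ ^ 2) = 4 := by
      rw [hc]; field_simp
    have h5 : D ^ 2 ≤ (c * (1 - ‖a‖)) ^ 2 := by
      nlinarith
    nlinarith [mul_pos hc0 hA0]
  have halam : ‖a - lam‖ ≤ c * (1 - ‖a‖) := by
    calc ‖a - lam‖ ≤ γ * D := hsub
      _ ≤ 1 * D := by nlinarith
      _ = D := one_mul _
      _ ≤ c * (1 - ‖a‖) := hDle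
  have htri : ‖1 - (starRingEnd ℂ) lam * z‖
      ≤ ‖1 - (starRingEnd ℂ) a * z‖ + ‖a - lam‖ := by
    have heq : 1 - (starRingEnd ℂ) lam * z
        = (1 - (starRingEnd ℂ) a * z) + ((starRingEnd ℂ) a - (starRingEnd ℂ) lam) * z := by
      ring
    rw [heq]
    have t1 := norm_add_le (1 - (starRingEnd ℂ) a * z)
      (((starRingEnd ℂ) a - (starRingEnd ℂ) lam) * z)
    have t2 : ‖((starRingEnd ℂ) a - (starRingEnd ℂ) lam) * z‖
        ≤ ‖a - lam‖ := by
      rw [norm_mul]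
      have h3 : ‖(starRingEnd ℂ) a - (starRingEnd ℂ) lam‖ = ‖a - lam‖ := by
        rw [← map_sub, Complex.norm_conj]
      rw [h3]
      exact mul_le_of_le_one_right (norm_nonneg _) hz
    linarith
  have hfin : 1 - ‖a‖ ≤ ‖1 - (starRingEnd ℂ) a * z‖ :=
    one_sub_le_denom z hz
  calc ‖1 - (starRingEnd ℂ) lam * z‖
      ≤ ‖1 - (starRingEnd ℂ) a * z‖ + ‖a - lam‖ := htri
    _ ≤ ‖1 - (starRingEnd ℂ) a * z‖ + c * (1 - ‖a‖) := by linarith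
    _ ≤ ‖1 - (starRingEnd ℂ) a * z‖
        + c * ‖1 - (starRingEnd ℂ) a * z‖ := by
          have := mul_le_mul_of_nonneg_left hfin hc0.le
          linarith
    _ = (1 + c) * ‖1 - (starRingEnd ℂ) a * z‖ := by ring

lemma shadowInt_eq (lam z : ℂ) :
    shadowInt lam z = ∫ θ in Set.Ioc (0:ℝ) (2 * Real.pi), (shSet lam).indicator (pker z) θ := by
  rw [shadowInt, intervalIntegral.integral_of_le (by positivity)]
  rfl

lemma shSet_measurable (lam : ℂ) : MeasurableSet (shSet lam) := by
  have : IsClosed (shSet lam) := by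
    apply isClosed_le _ continuous_const
    apply continuous_norm.comp
    exact (Complex.continuous_exp.comp (Complex.continuous_ofReal.mul continuous_const)).sub
      continuous_const
  exact this.measurableSet

lemma exp_sub_z_lb {z : ℂ} (θ : ℝ) (hz : ‖z‖ < 1) :
    1 - ‖z‖ ≤ ‖Complex.exp (θ * Complex.I) - z‖ := by
  have h1 : ‖Complex.exp (θ * Complex.I)‖ = 1 := Complex.norm_exp_ofReal_mul_I θ
  have := norm_sub_norm_le (Complex.exp (θ * Complex.I)) z
  linarith

lemma pker_nonneg {z : ℂ} (hz : ‖z‖ ≤ 1) (θ : ℝ) : 0 ≤ pker z θ := by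
  apply div_nonneg _ (by positivity)
  nlinarith [norm_nonneg z]

lemma pker_continuous {z : ℂ} (hz : ‖z‖ < 1) : Continuous (pker z) := by
  apply continuous_const.div
  · exact (continuous_norm.comp ((Complex.continuous_exp.comp
      (Complex.continuous_ofReal.mul continuous_const)).sub continuous_const)).pow 2
  · intro θ
    have h0 : 0 < ‖Complex.exp (θ * Complex.I) - z‖ :=
      lt_of_lt_of_le (by linarith) (exp_sub_z_lb θ hz)
    positivity

lemma shadow_integrableOn (lam : ℂ) {z : ℂ} (hz : ‖z‖ < 1) :
    IntegrableOn ((shSet lam).indicator (pker z)) (Set.Ioc (0:ℝ) (2 * Real.pi)) := by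
  apply MeasureTheory.Integrable.indicator _ (shSet_measurable lam)
  exact ((pker_continuous hz).integrableOn_Ioc)

lemma shadow_nonneg (lam : ℂ) {z : ℂ} (hz : ‖z‖ ≤ 1) : 0 ≤ shadowInt lam z := by
  rw [shadowInt]
  apply intervalIntegral.integral_nonneg (by positivity)
  intro θ _
  exact Set.indicator_nonneg (fun x _ => pker_nonneg hz x) θ

lemma chord (x y : ℝ) :
    ‖Complex.exp (x * Complex.I) - Complex.exp (y * Complex.I)‖
      = 2 * |Real.sin ((x - y) / 2)| := by
  have h1 : ‖Complex.exp (x * Complex.I) - Complex.exp (y * Complex.I)‖ ^ 2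
      = 2 - 2 * Real.cos (x - y) := by
    rw [Complex.sq_norm, Complex.normSq_apply]
    simp only [Complex.sub_re, Complex.sub_im, Complex.exp_ofReal_mul_I_re,
      Complex.exp_ofReal_mul_I_im]
    rw [Real.cos_sub]
    nlinarith [Real.sin_sq_add_cos_sq x, Real.sin_sq_add_cos_sq y]
  have h2 : (2 * |Real.sin ((x - y) / 2)|) ^ 2 = 2 - 2 * Real.cos (x - y) := by
    have h3 := Real.sin_sq_eq_half_sub ((x - y) / 2)
    rw [mul_pow, _root_.sq_abs]
    have : 2 * ((x - y) / 2) = x - y := by ring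
    rw [this] at h3
    nlinarith
  have h5 : ‖Complex.exp (x * Complex.I) - Complex.exp (y * Complex.I)‖ ^ 2
      = (2 * |Real.sin ((x - y) / 2)|) ^ 2 := h1.trans h2.symm
  have hA := norm_nonneg (Complex.exp (x * Complex.I) - Complex.exp (y * Complex.I))
  have hB : (0:ℝ) ≤ 2 * |Real.sin ((x - y) / 2)| := by positivity
  calc ‖Complex.exp (x * Complex.I) - Complex.exp (y * Complex.I)‖
      = Real.sqrt (‖Complex.exp (x * Complex.I) - Complex.exp (y * Complex.I)‖ ^ 2) :=
        (Real.sqrt_sq hA).symm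
    _ = Real.sqrt ((2 * |Real.sin ((x - y) / 2)|) ^ 2) := by rw [h5]
    _ = 2 * |Real.sin ((x - y) / 2)| := Real.sqrt_sq hB

lemma exists_t0 {lam : ℂ} (h0 : lam ≠ 0) :
    ∃ t₀ : ℝ, 0 ≤ t₀ ∧ t₀ < 2 * Real.pi ∧
      Complex.exp (t₀ * Complex.I) = lam / (‖lam‖ : ℂ) := by
  set ξ := lam / (‖lam‖ : ℂ) with hξ
  have habs : ‖lam‖ ≠ 0 := norm_ne_zero_iff.mpr h0
  have hξabs : ‖ξ‖ = 1 := by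
    rw [hξ, norm_div, Complex.norm_real, Real.norm_eq_abs, _root_.abs_of_nonneg (norm_nonneg lam),
      div_self habs]
  have hexp : Complex.exp ((Complex.arg ξ : ℝ) * Complex.I) = ξ := by
    have := Complex.norm_mul_exp_arg_mul_I ξ
    rwa [hξabs, Complex.ofReal_one, one_mul] at this
  rcases le_or_gt 0 (Complex.arg ξ) with h | h
  · exact ⟨Complex.arg ξ, h,
      lt_of_le_of_lt (Complex.arg_le_pi ξ) (by linarith [Real.pi_pos]), hexp⟩
  · refine ⟨Complex.arg ξ + 2 * Real.pi, by linarith [Complex.neg_pi_lt_arg ξ, Real.pi_pos],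
      by linarith [Real.pi_pos], ?_⟩
    push_cast
    rw [add_mul, Complex.exp_add, hexp, Complex.exp_two_pi_mul_I, mul_one]

lemma abs_xi_sub_lam {lam : ℂ} (h0 : lam ≠ 0) (h1 : ‖lam‖ < 1) :
    ‖lam / (‖lam‖ : ℂ) - lam‖ = 1 - ‖lam‖ := by
  have habs : (‖lam‖ : ℝ) ≠ 0 := norm_ne_zero_iff.mpr h0
  have heq : lam / (‖lam‖ : ℂ) - lam
      = (lam / (‖lam‖ : ℂ)) * (1 - ((‖lam‖ : ℝ) : ℂ)) := by
    have hcne : ((‖lam‖ : ℝ) : ℂ) ≠ 0 := Complex.ofReal_ne_zero.2 habs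
    rw [mul_sub, mul_one, div_mul_cancel₀ _ hcne]
  rw [heq, norm_mul, norm_div, Complex.norm_real, Real.norm_eq_abs, _root_.abs_of_nonneg (norm_nonneg lam),
    div_self habs, one_mul]
  have : ((1 : ℂ) - ((‖lam‖ : ℝ) : ℂ)) = (((1 - ‖lam‖ : ℝ)) : ℂ) := by
    push_cast; ring
  rw [this, Complex.norm_real, Real.norm_eq_abs, _root_.abs_of_nonneg (by linarith)]

lemma shadow_lower {lam z : ℂ} (hl1 : ‖lam‖ < 1) (hl0 : lam ≠ 0)
    (hz : ‖z‖ < 1) :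
    (1 - ‖lam‖) * (1 - ‖z‖ ^ 2)
      / (9 * ‖1 - (starRingEnd ℂ) lam * z‖ ^ 2) ≤ shadowInt lam z := by
  obtain ⟨t₀, ht0, ht2, hexp⟩ := exists_t0 hl0
  set r := 1 - ‖lam‖ with hr
  have hr0 : 0 < r := by rw [hr]; linarith
  have hr1 : r ≤ 1 := by rw [hr]; linarith [norm_nonneg lam]
  have hπ := Real.pi_pos
  have hπ3 : (3:ℝ) < Real.pi := Real.pi_gt_three
  set c : ℝ := if t₀ + r ≤ 2 * Real.pi then t₀ else t₀ - r with hc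
  have hJsub : Set.Ioc c (c + r) ⊆ Set.Ioc 0 (2 * Real.pi) := by
    rw [hc]
    split_ifs with h
    · intro θ hθ
      exact ⟨lt_of_le_of_lt ht0 hθ.1, le_trans hθ.2 h⟩
    · push_neg at h
      intro θ hθ
      constructor
      · have : r ≤ t₀ := by linarith
        have : (0:ℝ) < t₀ - r := by nlinarith
        linarith [hθ.1]
      · have : t₀ - r + r = t₀ := by ring
        calc θ ≤ t₀ - r + r := hθ.2
          _ = t₀ := this
          _ ≤ 2 * Real.pi := ht2.le
  have hclose : ∀ θ ∈ Set.Ioc c (c + r), |θ - t₀| ≤ r := by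
    intro θ hθ
    rw [hc] at hθ
    split_ifs at hθ with h
    · exact abs_le.2 ⟨by linarith [hθ.1], by linarith [hθ.2]⟩
    · exact abs_le.2 ⟨by linarith [hθ.1], by linarith [hθ.2]⟩
  have hJS : Set.Ioc c (c + r) ⊆ shSet lam := by
    intro θ hθ
    show ‖Complex.exp (θ * Complex.I) - lam / (‖lam‖ : ℂ)‖ ≤ 1 - ‖lam‖
    rw [← hexp, chord, ← hr]
    calc 2 * |Real.sin ((θ - t₀) / 2)| ≤ 2 * |(θ - t₀) / 2| := by
          have := Real.abs_sin_le_abs (x := (θ - t₀) / 2)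
          linarith
      _ = |θ - t₀| := by rw [abs_div, _root_.abs_two]; ring
      _ ≤ r := hclose θ hθ
  -- pointwise bound
  set D := ‖1 - (starRingEnd ℂ) lam * z‖ with hD
  have hD0 : 0 < D := denom_pos z hl1 hz.le
  have hpt : ∀ θ ∈ Set.Ioc c (c + r),
      (1 - ‖z‖ ^ 2) / (9 * D ^ 2) ≤ (shSet lam).indicator (pker z) θ := by
    intro θ hθ
    rw [Set.indicator_of_mem (hJS hθ)]
    have h1 : ‖Complex.exp (θ * Complex.I) - z‖ ≤ 3 * D := by
      have e1 : ‖Complex.exp (θ * Complex.I) - lam / (‖lam‖ : ℂ)‖ ≤ r :=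
        hJS hθ
      have e2 : ‖lam / (‖lam‖ : ℂ) - lam‖ = r := abs_xi_sub_lam hl0 hl1
      have e3 : ‖lam - z‖ ≤ D := num_le_denom hl1.le hz.le
      have e4 : r ≤ D := one_sub_le_denom z hz.le
      calc ‖Complex.exp (θ * Complex.I) - z‖
          ≤ ‖Complex.exp (θ * Complex.I) - lam / (‖lam‖ : ℂ)‖
            + ‖lam / (‖lam‖ : ℂ) - z‖ := by
            have := norm_sub_le_norm_sub_add_norm_sub (Complex.exp (θ * Complex.I))
              (lam / (‖lam‖ : ℂ)) z
            linarith
        _ ≤ ‖Complex.exp (θ * Complex.I) - lam / (‖lam‖ : ℂ)‖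
            + (‖lam / (‖lam‖ : ℂ) - lam‖ + ‖lam - z‖) := by
            have := norm_sub_le_norm_sub_add_norm_sub (lam / (‖lam‖ : ℂ)) lam z
            linarith
        _ ≤ r + (r + D) := by linarith
        _ ≤ 3 * D := by linarith
    have h2 : ‖Complex.exp (θ * Complex.I) - z‖ ^ 2 ≤ 9 * D ^ 2 := by
      nlinarith [norm_nonneg (Complex.exp (θ * Complex.I) - z)]
    have h3 : 0 < ‖Complex.exp (θ * Complex.I) - z‖ :=
      lt_of_lt_of_le (by linarith) (exp_sub_z_lb θ hz)
    rw [pker]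
    gcongr
    nlinarith [norm_nonneg z]
  -- integral bounds
  have hint : IntegrableOn ((shSet lam).indicator (pker z)) (Set.Ioc (0:ℝ) (2 * Real.pi)) :=
    shadow_integrableOn lam hz
  have hvol : (volume (Set.Ioc c (c + r))).toReal = r := by
    rw [Real.volume_Ioc]
    rw [ENNReal.toReal_ofReal (by linarith)]
    ring
  have h4 : (1 - ‖z‖ ^ 2) / (9 * D ^ 2) * (volume (Set.Ioc c (c + r))).toReal
      ≤ ∫ θ in Set.Ioc c (c + r), (shSet lam).indicator (pker z) θ := by
    apply setIntegral_ge_of_const_le_real measurableSet_Ioc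
    · exact (measure_Ioc_lt_top).ne
    · exact hpt
    · exact hint.mono_set hJsub
  have h5 : ∫ θ in Set.Ioc c (c + r), (shSet lam).indicator (pker z) θ
      ≤ ∫ θ in Set.Ioc (0:ℝ) (2 * Real.pi), (shSet lam).indicator (pker z) θ := by
    apply setIntegral_mono_set hint
    · exact Filter.Eventually.of_forall (fun θ => Set.indicator_nonneg
        (fun x _ => pker_nonneg hz.le x) θ)
    · exact Filter.Eventually.of_forall hJsub
  rw [shadowInt_eq]
  have : (1 - ‖lam‖) * (1 - ‖z‖ ^ 2) / (9 * D ^ 2)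
      = (1 - ‖z‖ ^ 2) / (9 * D ^ 2) * r := by
    rw [hr]; ring
  rw [this]
  calc (1 - ‖z‖ ^ 2) / (9 * D ^ 2) * r
      = (1 - ‖z‖ ^ 2) / (9 * D ^ 2) * (volume (Set.Ioc c (c + r))).toReal := by
        rw [hvol]
    _ ≤ ∫ θ in Set.Ioc c (c + r), (shSet lam).indicator (pker z) θ := h4
    _ ≤ _ := h5

lemma half_angle_bound {v r : ℝ} (hv : |v| ≤ Real.pi) (hr0 : 0 < r)
    (h : 2 * |Real.sin (v / 2)| ≤ r) : |v| ≤ 2 * r := by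
  have hπ := Real.pi_pos
  have hπ4 := Real.pi_le_four
  have h2 : |v / 2| ≤ Real.pi / 2 := by
    rw [abs_div, _root_.abs_two]
    linarith
  have h3 := Real.mul_abs_le_abs_sin h2
  rw [abs_div, _root_.abs_two] at h3
  -- h3 : 2 / π * (|v| / 2) ≤ |sin (v/2)|
  have h5 : 2 / Real.pi * (|v| / 2) ≤ r / 2 := by linarith
  have h6 : |v| / Real.pi ≤ r / 2 := by
    calc |v| / Real.pi = 2 / Real.pi * (|v| / 2) := by field_simp
      _ ≤ r / 2 := h5
  rw [div_le_iff₀ hπ] at h6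
  nlinarith [abs_nonneg v]

lemma shSet_subset {lam : ℂ} {t₀ : ℝ} (hl1 : ‖lam‖ < 1) (hl0 : lam ≠ 0)
    (ht0 : 0 ≤ t₀) (ht2 : t₀ < 2 * Real.pi)
    (hexp : Complex.exp (t₀ * Complex.I) = lam / (‖lam‖ : ℂ)) :
    shSet lam ∩ Set.Ioc 0 (2 * Real.pi) ⊆
      Set.Icc (t₀ - 2 * (1 - ‖lam‖)) (t₀ + 2 * (1 - ‖lam‖)) ∪
      (Set.Icc (t₀ + 2 * Real.pi - 2 * (1 - ‖lam‖))
          (t₀ + 2 * Real.pi + 2 * (1 - ‖lam‖)) ∪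
        Set.Icc (t₀ - 2 * Real.pi - 2 * (1 - ‖lam‖))
          (t₀ - 2 * Real.pi + 2 * (1 - ‖lam‖))) := by
  set r := 1 - ‖lam‖ with hr
  have hr0 : 0 < r := by rw [hr]; linarith
  have hπ := Real.pi_pos
  have hπ3 : (3:ℝ) < Real.pi := Real.pi_gt_three
  rintro θ ⟨hθS, hθI⟩
  have hch : 2 * |Real.sin ((θ - t₀) / 2)| ≤ r := by
    have : ‖Complex.exp (θ * Complex.I) - lam / (‖lam‖ : ℂ)‖ ≤ r := hθS
    rw [← hexp, chord] at this
    exact this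
  have hu1 : -(2 * Real.pi) < θ - t₀ := by
    have := hθI.1
    linarith
  have hu2 : θ - t₀ ≤ 2 * Real.pi := by
    have := hθI.2
    linarith
  rcases lt_or_ge Real.pi (θ - t₀) with h1 | h1
  · -- v = θ - t₀ - 2π ∈ (-π, 0]
    have hv : |θ - t₀ - 2 * Real.pi| ≤ Real.pi := abs_le.2 ⟨by linarith, by linarith⟩
    have hsin : 2 * |Real.sin ((θ - t₀ - 2 * Real.pi) / 2)| ≤ r := by
      have heq : (θ - t₀ - 2 * Real.pi) / 2 = (θ - t₀) / 2 - Real.pi := by ring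
      rw [heq, Real.sin_sub_pi, abs_neg]
      exact hch
    have := half_angle_bound hv hr0 hsin
    have hmem := abs_le.1 this
    right; left
    exact ⟨by linarith [hmem.1], by linarith [hmem.2]⟩
  rcases lt_or_ge (θ - t₀) (-Real.pi) with h2 | h2
  · have hv : |θ - t₀ + 2 * Real.pi| ≤ Real.pi := abs_le.2 ⟨by linarith, by linarith⟩
    have hsin : 2 * |Real.sin ((θ - t₀ + 2 * Real.pi) / 2)| ≤ r := by
      have heq : (θ - t₀ + 2 * Real.pi) / 2 = (θ - t₀) / 2 + Real.pi := by ring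
      rw [heq, Real.sin_add_pi, abs_neg]
      exact hch
    have := half_angle_bound hv hr0 hsin
    have hmem := abs_le.1 this
    right; right
    exact ⟨by linarith [hmem.1], by linarith [hmem.2]⟩
  · have hv : |θ - t₀| ≤ Real.pi := abs_le.2 ⟨by linarith, by linarith⟩
    have := half_angle_bound hv hr0 hch
    have hmem := abs_le.1 this
    left
    exact ⟨by linarith [hmem.1], by linarith [hmem.2]⟩

lemma shadow_upper {lam z : ℂ} (hl1 : ‖lam‖ < 1) (hl0 : lam ≠ 0)
    (hz : ‖z‖ < 1) :
    shadowInt lam z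
      ≤ 12 * (1 - ‖z‖ ^ 2) / (1 - ‖z‖) ^ 2 * (1 - ‖lam‖) := by
  obtain ⟨t₀, ht0, ht2, hexp⟩ := exists_t0 hl0
  set r := 1 - ‖lam‖ with hr
  have hr0 : 0 < r := by rw [hr]; linarith
  have habsz := norm_nonneg z
  set K := (1 - ‖z‖ ^ 2) / (1 - ‖z‖) ^ 2 with hK
  have hK0 : 0 ≤ K := by
    rw [hK]
    apply div_nonneg _ (by positivity)
    nlinarith
  have hpt : ∀ θ, (shSet lam).indicator (pker z) θ ≤ (shSet lam).indicator (fun _ => K) θ := by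
    intro θ
    by_cases hmem : θ ∈ shSet lam
    · rw [Set.indicator_of_mem hmem, Set.indicator_of_mem hmem]
      rw [pker, hK]
      have h1 : 1 - ‖z‖ ≤ ‖Complex.exp (θ * Complex.I) - z‖ :=
        exp_sub_z_lb θ hz
      have h2 : 0 < 1 - ‖z‖ := by linarith
      have h3 : (1 - ‖z‖) ^ 2 ≤ ‖Complex.exp (θ * Complex.I) - z‖ ^ 2 := by
        nlinarith
      exact div_le_div_of_nonneg_left (by nlinarith) (pow_pos h2 2) h3
    · rw [Set.indicator_of_notMem hmem, Set.indicator_of_notMem hmem]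
  have hintK : IntegrableOn ((shSet lam).indicator (fun _ => K)) (Set.Ioc (0:ℝ) (2 * Real.pi)) := by
    apply MeasureTheory.Integrable.indicator _ (shSet_measurable lam)
    exact integrableOn_const measure_Ioc_lt_top.ne
  have h1 : ∫ θ in Set.Ioc (0:ℝ) (2 * Real.pi), (shSet lam).indicator (pker z) θ
      ≤ ∫ θ in Set.Ioc (0:ℝ) (2 * Real.pi), (shSet lam).indicator (fun _ => K) θ :=
    setIntegral_mono (shadow_integrableOn lam hz) hintK hpt
  have h2 : ∫ θ in Set.Ioc (0:ℝ) (2 * Real.pi), (shSet lam).indicator (fun _ => K) θ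
      = K * (volume (shSet lam ∩ Set.Ioc (0:ℝ) (2 * Real.pi))).toReal := by
    rw [setIntegral_indicator (shSet_measurable lam), setIntegral_const, smul_eq_mul, mul_comm, Set.inter_comm, measureReal_def]
  have hA : volume (Set.Icc (t₀ - 2 * r) (t₀ + 2 * r)) = ENNReal.ofReal (4 * r) := by
    rw [Real.volume_Icc]; congr 1; ring
  have hB : volume (Set.Icc (t₀ + 2 * Real.pi - 2 * r) (t₀ + 2 * Real.pi + 2 * r))
      = ENNReal.ofReal (4 * r) := by
    rw [Real.volume_Icc]; congr 1; ring
  have hC : volume (Set.Icc (t₀ - 2 * Real.pi - 2 * r) (t₀ - 2 * Real.pi + 2 * r))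
      = ENNReal.ofReal (4 * r) := by
    rw [Real.volume_Icc]; congr 1; ring
  have hsub := shSet_subset hl1 hl0 ht0 ht2 hexp
  rw [← hr] at hsub
  have hvol : volume (shSet lam ∩ Set.Ioc (0:ℝ) (2 * Real.pi)) ≤ ENNReal.ofReal (12 * r) := by
    calc volume (shSet lam ∩ Set.Ioc (0:ℝ) (2 * Real.pi))
        ≤ volume (Set.Icc (t₀ - 2 * r) (t₀ + 2 * r) ∪
            (Set.Icc (t₀ + 2 * Real.pi - 2 * r) (t₀ + 2 * Real.pi + 2 * r) ∪
              Set.Icc (t₀ - 2 * Real.pi - 2 * r) (t₀ - 2 * Real.pi + 2 * r))) :=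
          measure_mono hsub
      _ ≤ volume (Set.Icc (t₀ - 2 * r) (t₀ + 2 * r)) +
            (volume (Set.Icc (t₀ + 2 * Real.pi - 2 * r) (t₀ + 2 * Real.pi + 2 * r)) +
              volume (Set.Icc (t₀ - 2 * Real.pi - 2 * r) (t₀ - 2 * Real.pi + 2 * r))) :=
          le_trans (measure_union_le _ _) (by gcongr; exact measure_union_le _ _)
      _ = ENNReal.ofReal (12 * r) := by
          rw [hA, hB, hC, ← ENNReal.ofReal_add (by positivity) (by positivity),
            ← ENNReal.ofReal_add (by positivity) (by positivity)]
          congr 1; ring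
  have hvolR : (volume (shSet lam ∩ Set.Ioc (0:ℝ) (2 * Real.pi))).toReal ≤ 12 * r :=
    ENNReal.toReal_le_of_le_ofReal (by positivity) hvol
  rw [shadowInt_eq]
  calc ∫ θ in Set.Ioc (0:ℝ) (2 * Real.pi), (shSet lam).indicator (pker z) θ
      ≤ K * (volume (shSet lam ∩ Set.Ioc (0:ℝ) (2 * Real.pi))).toReal := h1.trans h2.le
    _ ≤ K * (12 * r) := mul_le_mul_of_nonneg_left hvolR hK0
    _ = 12 * (1 - ‖z‖ ^ 2) / (1 - ‖z‖) ^ 2 * r := by rw [hK]; ring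

lemma fiber_sum_le {g : ℕ → ℝ} (hg0 : ∀ m, 0 ≤ g m) (hgs : Summable g)
    {l : ℕ → ℕ} {k : ℕ} (hmult : ∀ m, {n | l n = m}.Finite ∧ {n | l n = m}.ncard ≤ k)
    (s : Finset ℕ) : ∑ n ∈ s, g (l n) ≤ (k : ℝ) * ∑' m, g m := by
  have h1 : ∑ m ∈ s.image l, ∑ n ∈ s.filter (fun n => l n = m), g (l n) = ∑ n ∈ s, g (l n) :=
    Finset.sum_fiberwise_of_maps_to (fun x hx => Finset.mem_image_of_mem l hx) _
  rw [← h1]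
  have h2 : ∀ m ∈ s.image l, ∑ n ∈ s.filter (fun n => l n = m), g (l n) ≤ (k : ℝ) * g m := by
    intro m _
    have he : ∑ n ∈ s.filter (fun n => l n = m), g (l n)
        = ((s.filter (fun n => l n = m)).card : ℝ) * g m := by
      rw [Finset.sum_congr rfl (fun n hn => by rw [(Finset.mem_filter.1 hn).2]),
        Finset.sum_const, nsmul_eq_mul]
    rw [he]
    have hcard : (s.filter (fun n => l n = m)).card ≤ k := by
      have hsub : s.filter (fun n => l n = m) ⊆ (hmult m).1.toFinset := by
        intro n hn
        rw [Set.Finite.mem_toFinset]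
        exact (Finset.mem_filter.1 hn).2
      calc (s.filter (fun n => l n = m)).card ≤ (hmult m).1.toFinset.card :=
            Finset.card_le_card hsub
        _ = {n | l n = m}.ncard := (Set.ncard_eq_toFinset_card _ (hmult m).1).symm
        _ ≤ k := (hmult m).2
    exact mul_le_mul_of_nonneg_right (by exact_mod_cast hcard) (hg0 m)
  calc ∑ m ∈ s.image l, ∑ n ∈ s.filter (fun n => l n = m), g (l n)
      ≤ ∑ m ∈ s.image l, (k : ℝ) * g m := Finset.sum_le_sum h2
    _ = (k : ℝ) * ∑ m ∈ s.image l, g m := by rw [Finset.mul_sum]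
    _ ≤ (k : ℝ) * ∑' m, g m := by
        apply mul_le_mul_of_nonneg_left _ (Nat.cast_nonneg k)
        exact Summable.sum_le_tsum _ (fun i _ => hg0 i) hgs

/-- Lemma 2.2 of the paper. -/
theorem stmt_7 (Λ A : ℕ → ℂ) (l : ℕ → ℕ) (γ : ℝ) (k : ℕ)
    (hΛd : ∀ n, Λ n ∈ Metric.ball (0:ℂ) 1 ∧ Λ n ≠ 0)
    (hΛB : Summable fun n => 1 - ‖Λ n‖)
    (hAd : ∀ n, A n ∈ Metric.ball (0:ℂ) 1)
    (hγ0 : 0 < γ) (hγ1 : γ < 1)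
    (hclose : ∀ n, pd (A n) (Λ (l n)) ≤ γ)
    (hmult : ∀ m, {n | l n = m}.Finite ∧ {n | l n = m}.ncard ≤ k) :
    (Summable fun n => 1 - ‖A n‖) ∧
      ∀ δ : ℝ, 0 < δ → ∃ C : ℝ, 0 < C ∧ ∀ z ∈ Metric.ball (0:ℂ) 1,
        (Summable fun n =>
          if δ < pd (A n) z then Real.log (1 / pd (A n) z) else 0) ∧
        (∑' n, if δ < pd (A n) z then Real.log (1 / pd (A n) z) else 0)
          ≤ C * HΛ Λ z := by
  have habsA : ∀ n, ‖A n‖ < 1 := by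
    intro n
    have := hAd n
    rwa [Metric.mem_ball, Complex.dist_eq, sub_zero] at this
  have habsL : ∀ n, ‖Λ n‖ < 1 := by
    intro n
    have := (hΛd n).1
    rwa [Metric.mem_ball, Complex.dist_eq, sub_zero] at this
  have hγsq : 0 < 1 - γ ^ 2 := by nlinarith
  set c : ℝ := 4 / (1 - γ ^ 2) with hcdef
  have hc0 : 0 < c := by positivity
  have hgΛ0 : ∀ m, 0 ≤ 1 - ‖Λ m‖ := fun m => by linarith [habsL m]
  have hk1 : 1 ≤ k := by
    by_contra hcon
    push_neg at hcon
    interval_cases k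
    have h0 : (0:ℕ) ∈ {n | l n = l 0} := rfl
    have h1 := (Set.ncard_pos (hmult (l 0)).1).2 ⟨0, h0⟩
    have h2 := (hmult (l 0)).2
    omega
  have hcomp : ∀ n, 1 - ‖A n‖ ≤ c * (1 - ‖Λ (l n)‖) := by
    intro n
    exact (close_est (habsA n) (habsL (l n)) (by norm_num : ‖(0:ℂ)‖ ≤ 1)
      hγ0.le hγ1 (hclose n)).1
  constructor
  · apply summable_of_sum_range_le (c := c * ((k : ℝ) * ∑' m, (1 - ‖Λ m‖)))
      (fun n => by linarith [habsA n])
    intro n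
    calc ∑ i ∈ Finset.range n, (1 - ‖A i‖)
        ≤ ∑ i ∈ Finset.range n, c * (1 - ‖Λ (l i)‖) :=
          Finset.sum_le_sum (fun i _ => hcomp i)
      _ = c * ∑ i ∈ Finset.range n, (1 - ‖Λ (l i)‖) := by rw [Finset.mul_sum]
      _ ≤ c * ((k : ℝ) * ∑' m, (1 - ‖Λ m‖)) :=
          mul_le_mul_of_nonneg_left (fiber_sum_le hgΛ0 hΛB hmult _) hc0.le
  · intro δ hδ
    set C' : ℝ := 18 * c * (1 + c) ^ 2 / δ with hC'def
    have hC'0 : 0 < C' := by positivity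
    have hkR : (0:ℝ) < (k : ℝ) := by exact_mod_cast hk1
    refine ⟨C' * k, mul_pos hC'0 hkR, ?_⟩
    intro z hzball
    have hz : ‖z‖ < 1 := by
      rwa [Metric.mem_ball, Complex.dist_eq, sub_zero] at hzball
    set f : ℕ → ℝ := fun n => if δ < pd (A n) z then Real.log (1 / pd (A n) z) else 0 with hf
    have hf0 : ∀ n, 0 ≤ f n := by
      intro n
      simp only [hf]
      split_ifs with h
      · apply Real.log_nonneg
        rw [le_div_iff₀ (lt_trans hδ h), one_mul]
        exact pd_le_one (habsA n) hz.le
      · exact le_refl 0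
    have hpt : ∀ n, f n ≤ C' * shadowInt (Λ (l n)) z := by
      intro n
      have hshn : 0 ≤ shadowInt (Λ (l n)) z := shadow_nonneg _ hz.le
      simp only [hf]
      split_ifs with h
      · have hlog := log_bound hδ h (pd_le_one (habsA n) hz.le)
        have hpd := one_sub_pd_sq (habsA n) hz
        obtain ⟨hi, hii⟩ := close_est (habsA n) (habsL (l n)) hz.le hγ0.le hγ1 (hclose n)
        rw [← hcdef] at hi hii
        set Da := ‖1 - (starRingEnd ℂ) (A n) * z‖ with hDadef
        set Dl := ‖1 - (starRingEnd ℂ) (Λ (l n)) * z‖ with hDldef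
        have hDa0 : 0 < Da := denom_pos z (habsA n) hz.le
        have hDl0 : 0 < Dl := denom_pos z (habsL (l n)) hz.le
        have hsq : Dl ^ 2 ≤ (1 + c) ^ 2 * Da ^ 2 := by nlinarith [hDa0.le, hDl0.le]
        have hz2 : 0 ≤ 1 - ‖z‖ ^ 2 := by nlinarith [norm_nonneg z]
        have hL1 : 0 ≤ 1 - ‖Λ (l n)‖ := hgΛ0 (l n)
        have e1 : 1 - ‖A n‖ ^ 2 ≤ 2 * c * (1 - ‖Λ (l n)‖) := by
          nlinarith [hi, norm_nonneg (A n), habsA n]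
        have key : (1 - ‖A n‖ ^ 2) * (1 - ‖z‖ ^ 2) / Da ^ 2
            ≤ 18 * c * (1 + c) ^ 2
              * ((1 - ‖Λ (l n)‖) * (1 - ‖z‖ ^ 2) / (9 * Dl ^ 2)) := by
          have hrhs : 18 * c * (1 + c) ^ 2
              * ((1 - ‖Λ (l n)‖) * (1 - ‖z‖ ^ 2) / (9 * Dl ^ 2))
              = (2 * c * (1 - ‖Λ (l n)‖) * (1 - ‖z‖ ^ 2)) * (1 + c) ^ 2
                / Dl ^ 2 := by
            field_simp
            ring
          rw [hrhs, div_le_div_iff₀ (pow_pos hDa0 2) (pow_pos hDl0 2)]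
          calc (1 - ‖A n‖ ^ 2) * (1 - ‖z‖ ^ 2) * Dl ^ 2
              ≤ (2 * c * (1 - ‖Λ (l n)‖) * (1 - ‖z‖ ^ 2)) * Dl ^ 2 := by
                apply mul_le_mul_of_nonneg_right _ (sq_nonneg Dl)
                exact mul_le_mul_of_nonneg_right e1 hz2
            _ ≤ (2 * c * (1 - ‖Λ (l n)‖) * (1 - ‖z‖ ^ 2))
                  * ((1 + c) ^ 2 * Da ^ 2) := by
                apply mul_le_mul_of_nonneg_left hsq
                positivity
            _ = 2 * c * (1 - ‖Λ (l n)‖) * (1 - ‖z‖ ^ 2) * (1 + c) ^ 2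
                  * Da ^ 2 := by ring
        have hSL : (1 - ‖Λ (l n)‖) * (1 - ‖z‖ ^ 2) / (9 * Dl ^ 2)
            ≤ shadowInt (Λ (l n)) z := shadow_lower (habsL (l n)) (hΛd (l n)).2 hz
        calc Real.log (1 / pd (A n) z) ≤ (1 - pd (A n) z ^ 2) / δ := hlog
          _ = (1 - ‖A n‖ ^ 2) * (1 - ‖z‖ ^ 2) / Da ^ 2 / δ := by
              rw [hpd]
          _ ≤ 18 * c * (1 + c) ^ 2
                * ((1 - ‖Λ (l n)‖) * (1 - ‖z‖ ^ 2) / (9 * Dl ^ 2)) / δ := by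
              gcongr
          _ = C' * ((1 - ‖Λ (l n)‖) * (1 - ‖z‖ ^ 2) / (9 * Dl ^ 2)) := by
              rw [hC'def]
              field_simp
          _ ≤ C' * shadowInt (Λ (l n)) z := mul_le_mul_of_nonneg_left hSL hC'0.le
      · exact mul_nonneg hC'0.le hshn
    have hg2 : ∀ m, 0 ≤ shadowInt (Λ m) z := fun m => shadow_nonneg _ hz.le
    have hg2s : Summable (fun m => shadowInt (Λ m) z) := by
      apply Summable.of_nonneg_of_le hg2 (fun m => shadow_upper (habsL m) (hΛd m).2 hz)
      exact hΛB.mul_left _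
    have hbound : ∀ n, ∑ i ∈ Finset.range n, f i ≤ C' * (k : ℝ) * HΛ Λ z := by
      intro n
      calc ∑ i ∈ Finset.range n, f i
          ≤ ∑ i ∈ Finset.range n, C' * shadowInt (Λ (l i)) z :=
            Finset.sum_le_sum (fun i _ => hpt i)
        _ = C' * ∑ i ∈ Finset.range n, shadowInt (Λ (l i)) z := by rw [Finset.mul_sum]
        _ ≤ C' * ((k : ℝ) * ∑' m, shadowInt (Λ m) z) :=
            mul_le_mul_of_nonneg_left (fiber_sum_le hg2 hg2s hmult _) hC'0.le
        _ = C' * (k : ℝ) * HΛ Λ z := by rw [HΛ]; ring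
    exact ⟨summable_of_sum_range_le hf0 hbound, Real.tsum_le_of_sum_range_le hf0 hbound⟩
end

section
/- There exists a universal constant C₀ ≥ 1 such that: for any Blaschke sequence Λ in the unit disc, any positive harmonic function H on 𝔻, and any z ∈ 𝔻 with e^{H(z)} ≥ max(C₀, #{λ ∈ Λ : ρ(λ,z) ≤ 1/2}), there exists z̃ ∈ 𝔻 with ρ(z̃, Λ) ≥ e^{−H(z̃)} and ρ(z̃, z) ≤ e^{−H(z)/C₀}. -/
open Complex Metric Set

/-- A positive harmonic function on the unit disc, characterized (the disc being
simply connected) as a positive function that is the real part of a holomorphic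
function on the disc. -/
def IsPosHarmonicDisc (H : ℂ → ℝ) : Prop :=
  (∃ F : ℂ → ℂ, DifferentiableOn ℂ F (Metric.ball (0:ℂ) 1) ∧
      ∀ z ∈ Metric.ball (0:ℂ) 1, H z = (F z).re) ∧
    ∀ z ∈ Metric.ball (0:ℂ) 1, 0 < H z

lemma key_id (u v : ℂ) :
    Complex.normSq (1 - (starRingEnd ℂ) u * v) - Complex.normSq (u - v)
      = (1 - Complex.normSq u) * (1 - Complex.normSq v) := by
  simp only [Complex.normSq_apply, Complex.sub_re, Complex.sub_im, Complex.mul_re,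
    Complex.mul_im, Complex.one_re, Complex.one_im, Complex.conj_re, Complex.conj_im]
  ring

lemma one_sub_ne {u v : ℂ} (hu : ‖u‖ < 1) (hv : ‖v‖ < 1) :
    1 - (starRingEnd ℂ) u * v ≠ 0 := by
  intro h
  have h1 : (starRingEnd ℂ) u * v = 1 := by linear_combination -h
  have : ‖((starRingEnd ℂ) u * v)‖ < 1 := by
    rw [norm_mul, Complex.norm_conj]
    calc ‖u‖ * ‖v‖ ≤ ‖u‖ * 1 :=
          mul_le_mul_of_nonneg_left hv.le (norm_nonneg _)
      _ < 1 := by simpa using hu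
  rw [h1] at this; simp at this

lemma one_add_ne {u v : ℂ} (hu : ‖u‖ < 1) (hv : ‖v‖ < 1) :
    1 + (starRingEnd ℂ) u * v ≠ 0 := by
  have := one_sub_ne hu (v := -v) (by simpa using hv)
  intro h; apply this; rw [mul_neg]; linear_combination h

lemma abs_sub_lt {u v : ℂ} (hu : ‖u‖ < 1) (hv : ‖v‖ < 1) :
    ‖(u - v)‖ < ‖(1 - (starRingEnd ℂ) u * v)‖ := by
  have h1 : Complex.normSq u < 1 := by
    rw [← Complex.sq_norm] at *; nlinarith [norm_nonneg u]
  have h2 : Complex.normSq v < 1 := by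
    rw [← Complex.sq_norm] at *; nlinarith [norm_nonneg v]
  have h3 : Complex.normSq (u - v) < Complex.normSq (1 - (starRingEnd ℂ) u * v) := by
    have := key_id u v; nlinarith
  rw [Complex.norm_def, Complex.norm_def]
  exact Real.sqrt_lt_sqrt (Complex.normSq_nonneg _) h3

noncomputable def mob (z w : ℂ) : ℂ := (w + z) / (1 + (starRingEnd ℂ) z * w)

lemma mob_zero (z : ℂ) : mob z 0 = z := by simp [mob]

lemma mob_abs_lt {z u : ℂ} (hz : ‖z‖ < 1) (hu : ‖u‖ < 1) :
    ‖(mob z u)‖ < 1 := by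
  have hnz : ‖(-z)‖ < 1 := by simpa using hz
  have h := abs_sub_lt hu hnz
  have hden : ‖(1 + (starRingEnd ℂ) z * u)‖ ≠ 0 :=
    norm_ne_zero_iff.mpr (one_add_ne hz hu)
  have e1 : u - -z = u + z := by ring
  have e2 : ‖(1 - (starRingEnd ℂ) u * -z)‖ = ‖(1 + (starRingEnd ℂ) z * u)‖ := by
    rw [← Complex.norm_conj (1 - (starRingEnd ℂ) u * -z)]
    congr 1
    simp only [map_sub, map_one, map_mul, map_neg, Complex.conj_conj]
    ring
  rw [e1, e2] at h
  rw [mob, norm_div, div_lt_one (lt_of_le_of_ne (norm_nonneg _) (Ne.symm hden))]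
  exact h

lemma pd_mob {z u v : ℂ} (hz : ‖z‖ < 1) (hu : ‖u‖ < 1)
    (hv : ‖v‖ < 1) : pd (mob z u) (mob z v) = pd u v := by
  set c := (starRingEnd ℂ) z with hc
  have hd1 : 1 + c * u ≠ 0 := one_add_ne hz hu
  have hd2 : 1 + c * v ≠ 0 := one_add_ne hz hv
  have hcz : 1 - c * z ≠ 0 := one_sub_ne hz hz
  have hA : (mob z u - mob z v) * ((1 + c * u) * (1 + c * v)) = (u - v) * (1 - c * z) := by
    rw [mob, mob, ← hc, div_sub_div _ _ hd1 hd2, div_mul_cancel₀ _ (mul_ne_zero hd1 hd2)]; ring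
  have hB : (1 - (starRingEnd ℂ) (mob z u) * mob z v) *
      ((starRingEnd ℂ) (1 + c * u) * (1 + c * v)) = (1 - (starRingEnd ℂ) u * v) * (1 - c * z) := by
    have hconjd : (starRingEnd ℂ) (1 + c * u) = 1 + z * (starRingEnd ℂ) u := by
      simp [hc, map_add, map_mul, Complex.conj_conj]
    have hne : (1 : ℂ) + z * (starRingEnd ℂ) u ≠ 0 := by
      rw [← hconjd]; intro h
      exact hd1 (by simpa using congrArg (starRingEnd ℂ) h)
    rw [mob, mob, map_div₀, hconjd, ← hc]
    rw [div_mul_div_comm, sub_mul, div_mul_cancel₀ _ (mul_ne_zero hne hd2)]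
    simp only [map_add, ← hc]
    ring
  -- take absolute values
  have hAabs := congrArg norm hA
  have hBabs := congrArg norm hB
  simp only [norm_mul] at hAabs hBabs
  rw [Complex.norm_conj] at hBabs
  set D := ‖(1 + c * u)‖ * ‖(1 + c * v)‖ with hD
  have hDpos : 0 < D := mul_pos (norm_pos_iff.mpr hd1) (norm_pos_iff.mpr hd2)
  have hb2 : 0 < ‖(1 - (starRingEnd ℂ) u * v)‖ := norm_pos_iff.mpr (one_sub_ne hu hv)
  have hb1 : 0 < ‖(1 - (starRingEnd ℂ) (mob z u) * mob z v)‖ := by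
    by_contra hcon
    push_neg at hcon
    have : ‖(1 - (starRingEnd ℂ) (mob z u) * mob z v)‖ = 0 :=
      le_antisymm hcon (norm_nonneg _)
    rw [this, zero_mul] at hBabs
    have : ‖(1 - (starRingEnd ℂ) u * v)‖ * ‖(1 - c * z)‖ = 0 := hBabs.symm
    rcases mul_eq_zero.mp this with h | h
    · exact hb2.ne' h
    · exact (norm_pos_iff.mpr hcz).ne' h
  rw [pd, pd]
  rw [div_eq_div_iff hb1.ne' hb2.ne']
  have hE : 0 ≤ ‖(1 - c * z)‖ := norm_nonneg _
  nlinarith [hAabs, hBabs, norm_nonneg (u - v), norm_nonneg (mob z u - mob z v)]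

lemma mob_inv {z a : ℂ} (hz : ‖z‖ < 1) (ha : ‖a‖ < 1) :
    mob z ((a - z) / (1 - (starRingEnd ℂ) z * a)) = a := by
  set c := (starRingEnd ℂ) z with hc
  have hd : 1 - c * a ≠ 0 := one_sub_ne hz ha
  have hcz : 1 - c * z ≠ 0 := one_sub_ne hz hz
  have hden : 1 + c * ((a - z) / (1 - c * a)) = (1 - c * z) / (1 - c * a) := by
    field_simp; ring
  rw [mob, ← hc, hden, div_eq_iff (div_ne_zero hcz hd)]
  rw [div_add' _ _ _ hd, mul_div_assoc', div_left_inj' hd]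
  ring

lemma mu_abs_lt {z a : ℂ} (hz : ‖z‖ < 1) (ha : ‖a‖ < 1) :
    ‖((a - z) / (1 - (starRingEnd ℂ) z * a))‖ < 1 := by
  rw [norm_div, div_lt_one (norm_pos_iff.mpr (one_sub_ne hz ha))]
  have h := abs_sub_lt hz ha
  calc ‖(a - z)‖ = ‖(z - a)‖ := by
        rw [show a - z = -(z - a) by ring, norm_neg]
    _ < ‖(1 - (starRingEnd ℂ) z * a)‖ := h

lemma rp_id (p q : ℂ) :
    Complex.normSq (p + (starRingEnd ℂ) q) - Complex.normSq (p - q) = 4 * p.re * q.re := by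
  simp only [Complex.normSq_apply, Complex.sub_re, Complex.sub_im, Complex.add_re,
    Complex.add_im, Complex.conj_re, Complex.conj_im]
  ring

lemma rp_ne {p q : ℂ} (hp : 0 < p.re) (hq : 0 < q.re) : p + (starRingEnd ℂ) q ≠ 0 := by
  intro h
  have := congrArg Complex.re h
  simp only [Complex.add_re, Complex.conj_re, Complex.zero_re] at this
  linarith

lemma rp_abs_lt {p q : ℂ} (hp : 0 < p.re) (hq : 0 < q.re) :
    ‖(p - q)‖ < ‖(p + (starRingEnd ℂ) q)‖ := by
  rw [Complex.norm_def, Complex.norm_def]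
  refine Real.sqrt_lt_sqrt (Complex.normSq_nonneg _) ?_
  have := rp_id p q
  nlinarith

lemma harnack {F : ℂ → ℂ} (hF : DifferentiableOn ℂ F (Metric.ball (0:ℂ) 1))
    (hpos : ∀ ζ ∈ Metric.ball (0:ℂ) 1, 0 < (F ζ).re)
    {z w : ℂ} (hz : ‖z‖ < 1) (hw : ‖w‖ < 1) :
    (F z).re * (1 - ‖w‖) ≤ (F (mob z w)).re * (1 + ‖w‖) := by
  have hball : ∀ u : ℂ, ‖u‖ < 1 → u ∈ Metric.ball (0:ℂ) 1 := by
    intro u hu; simpa [Metric.mem_ball, Complex.dist_eq] using hu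
  have hzb := hball z hz
  have hmob_maps : Set.MapsTo (mob z) (Metric.ball (0:ℂ) 1) (Metric.ball (0:ℂ) 1) := by
    intro u hu
    have : ‖u‖ < 1 := by simpa [Metric.mem_ball, Complex.dist_eq] using hu
    exact hball _ (mob_abs_lt hz this)
  have hmob_diff : DifferentiableOn ℂ (mob z) (Metric.ball (0:ℂ) 1) := by
    apply DifferentiableOn.div
    · exact (differentiable_id.add_const z).differentiableOn
    · exact ((differentiable_const (1:ℂ)).add (differentiable_id.const_mul _)).differentiableOn
    · intro x hx
      have : ‖x‖ < 1 := by simpa [Metric.mem_ball, Complex.dist_eq] using hx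
      exact one_add_ne hz this
  have hFm : DifferentiableOn ℂ (fun ξ => F (mob z ξ)) (Metric.ball (0:ℂ) 1) :=
    hF.comp hmob_diff hmob_maps
  have hden_ne : ∀ ξ ∈ Metric.ball (0:ℂ) 1, F (mob z ξ) + (starRingEnd ℂ) (F z) ≠ 0 := by
    intro ξ hξ
    exact rp_ne (hpos _ (hmob_maps hξ)) (hpos _ hzb)
  set g : ℂ → ℂ := fun ξ => (F (mob z ξ) - F z) / (F (mob z ξ) + (starRingEnd ℂ) (F z)) with hg
  have hgdiff : DifferentiableOn ℂ g (Metric.ball (0:ℂ) 1) := by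
    apply DifferentiableOn.div
    · exact hFm.sub_const _
    · exact hFm.add_const _
    · exact hden_ne
  have hg0 : g 0 = 0 := by
    simp only [hg, mob_zero, sub_self, zero_div]
  have hgmaps : Set.MapsTo g (Metric.ball (0:ℂ) 1) (Metric.ball (g 0) 1) := by
    rw [hg0]
    intro ξ hξ
    have h1 := rp_abs_lt (hpos _ (hmob_maps hξ)) (hpos _ hzb)
    have h2 : 0 < ‖(F (mob z ξ) + (starRingEnd ℂ) (F z))‖ :=
      norm_pos_iff.mpr (hden_ne ξ hξ)
    simp only [Metric.mem_ball, Complex.dist_eq, sub_zero, hg]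
    rw [norm_div, div_lt_one h2]
    exact h1
  have hschwarz := Complex.dist_le_div_mul_dist_of_mapsTo_ball hgdiff (hgmaps.mono_right Metric.ball_subset_closedBall) (hball w hw)
  rw [hg0] at hschwarz
  simp only [Complex.dist_eq, sub_zero] at hschwarz
  rw [div_self (one_ne_zero), one_mul] at hschwarz
  -- |g w| ≤ |w|
  set p := F (mob z w) with hp
  set q := F z with hq
  have hpre : 0 < p.re := hpos _ (hmob_maps (hball w hw))
  have hqre : 0 < q.re := hpos _ hzb
  have hdne : p + (starRingEnd ℂ) q ≠ 0 := rp_ne hpre hqre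
  have habs : ‖(p - q)‖ ≤ ‖w‖ * ‖(p + (starRingEnd ℂ) q)‖ := by
    have : p - q = g w * (p + (starRingEnd ℂ) q) := by
      simp only [hg]; field_simp
      rw [← hp, mul_div_cancel_right₀ _ hdne]
    rw [this, norm_mul]
    exact mul_le_mul_of_nonneg_right hschwarz (norm_nonneg _)
  -- square it
  have hsq : Complex.normSq (p - q) ≤
      (‖w‖)^2 * Complex.normSq (p + (starRingEnd ℂ) q) := by
    have h1 : (‖(p - q)‖)^2 ≤
        (‖w‖ * ‖(p + (starRingEnd ℂ) q)‖)^2 := by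
      apply sq_le_sq' _ habs
      have := norm_nonneg (p - q)
      nlinarith [mul_nonneg (norm_nonneg w) (norm_nonneg (p + (starRingEnd ℂ) q))]
    rw [mul_pow, Complex.sq_norm (p - q), Complex.sq_norm (p + (starRingEnd ℂ) q)] at h1
    exact h1
  set ρ := ‖w‖ with hρ
  have hρ0 : 0 ≤ ρ := norm_nonneg w
  have hρ1 : ρ < 1 := hw
  have hid1 : Complex.normSq (p - q) = (p.re - q.re)^2 + (p.im - q.im)^2 := by
    simp [Complex.normSq_apply, Complex.sub_re, Complex.sub_im]; ring
  have hid2 : Complex.normSq (p + (starRingEnd ℂ) q) = (p.re + q.re)^2 + (p.im - q.im)^2 := by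
    simp [Complex.normSq_apply, Complex.add_re, Complex.add_im, Complex.conj_re, Complex.conj_im]
    ring
  rw [hid1, hid2] at hsq
  have hD : 0 ≤ (1 - ρ^2) * (p.im - q.im)^2 :=
    mul_nonneg (by nlinarith) (sq_nonneg _)
  have hkey : (q.re - p.re)^2 ≤ (ρ * (p.re + q.re))^2 := by nlinarith [hD]
  have hs0 : 0 ≤ ρ * (p.re + q.re) := mul_nonneg hρ0 (by positivity)
  nlinarith [hkey, hs0, mul_nonneg hs0 hs0]

lemma abs_one_sub_comm (z a : ℂ) :
    ‖(1 - (starRingEnd ℂ) z * a)‖ = ‖(1 - (starRingEnd ℂ) a * z)‖ := by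
  rw [← Complex.norm_conj (1 - (starRingEnd ℂ) z * a)]
  congr 1
  simp only [map_sub, map_one, map_mul, Complex.conj_conj]
  ring

lemma abs_one_sub_le {x : ℂ} : ‖(1 - x)‖ ≤ 1 + ‖x‖ := by
  calc ‖(1 - x)‖ ≤ ‖(1:ℂ)‖ + ‖(-x)‖ := by
        simpa [sub_eq_add_neg] using norm_add_le 1 (-x)
    _ = 1 + ‖x‖ := by simp

lemma abs_one_sub_ge {x : ℂ} : 1 - ‖x‖ ≤ ‖(1 - x)‖ := by
  have := norm_sub_norm_le 1 x
  simpa using this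

lemma nat_cast_dist {a b : ℕ} (h : a ≠ b) : (1:ℝ) ≤ |(a:ℝ) - (b:ℝ)| := by
  have h1 : (1:ℤ) ≤ |(a:ℤ) - (b:ℤ)| :=
    Int.one_le_abs (sub_ne_zero.2 (by exact_mod_cast h))
  have h2 : ((1:ℤ):ℝ) ≤ ((|(a:ℤ) - (b:ℤ)|:ℤ):ℝ) := by exact_mod_cast h1
  rw [Int.cast_abs] at h2
  push_cast at h2
  exact h2

lemma exp_four_ge : (40:ℝ) ≤ Real.exp 4 := by
  have e27 : (2.7:ℝ) ≤ Real.exp 1 := by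
    have := Real.exp_one_gt_d9
    norm_num at this ⊢
    linarith
  have h4 : Real.exp 4 = (Real.exp 1)^4 := by
    rw [show (4:ℝ) = ((4:ℕ):ℝ) * 1 by norm_num, Real.exp_nat_mul]
  rw [h4]
  calc (40:ℝ) ≤ 2.7^4 := by norm_num
    _ ≤ (Real.exp 1)^4 := by
        apply pow_le_pow_left₀ (by norm_num) e27

lemma exp_three_ge : (10:ℝ) ≤ Real.exp 3 := by
  have e27 : (2.7:ℝ) ≤ Real.exp 1 := by
    have := Real.exp_one_gt_d9
    norm_num at this ⊢
    linarith
  have h3 : Real.exp 3 = (Real.exp 1)^3 := by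
    rw [show (3:ℝ) = ((3:ℕ):ℝ) * 1 by norm_num, Real.exp_nat_mul]
  rw [h3]
  calc (10:ℝ) ≤ 2.7^3 := by norm_num
    _ ≤ (Real.exp 1)^3 := by
        apply pow_le_pow_left₀ (by norm_num) e27

lemma exp_forty_ge : (400:ℝ) ≤ Real.exp 40 := by
  have h : Real.exp 40 = (Real.exp 4)^10 := by
    rw [show (40:ℝ) = ((10:ℕ):ℝ) * 4 by norm_num, Real.exp_nat_mul]
  rw [h]
  calc (400:ℝ) ≤ 40^10 := by norm_num
    _ ≤ (Real.exp 4)^10 := pow_le_pow_left₀ (by norm_num) exp_four_ge 10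


set_option maxHeartbeats 2000000 in
/-- Lemma 3.2 of the paper. -/
theorem stmt_13 :
    ∃ C₀ : ℝ, 1 ≤ C₀ ∧ ∀ (Λ : ℕ → ℂ) (H : ℂ → ℝ),
      (∀ k, Λ k ∈ Metric.ball (0:ℂ) 1) →
      (Summable fun k => 1 - ‖Λ k‖) →
      IsPosHarmonicDisc H →
      ∀ z ∈ Metric.ball (0:ℂ) 1,
        max C₀ ({k | pd (Λ k) z ≤ 1 / 2}.ncard : ℝ) ≤ Real.exp (H z) →
        ∃ zt ∈ Metric.ball (0:ℂ) 1,
          (∀ k, Real.exp (-H zt) ≤ pd zt (Λ k)) ∧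
          pd zt z ≤ Real.exp (-H z / C₀) := by
  refine ⟨Real.exp 40, by linarith [exp_forty_ge], ?_⟩
  intro Λ H hΛ hsum hH z hz hmax
  obtain ⟨⟨F, hFd, hFre⟩, hHpos⟩ := hH
  have hz1 : ‖z‖ < 1 := by
    simpa [Metric.mem_ball, Complex.dist_eq] using hz
  have hΛ1 : ∀ k, ‖(Λ k)‖ < 1 := by
    intro k; simpa [Metric.mem_ball, Complex.dist_eq] using hΛ k
  set h := H z with hh
  have hh40 : (40:ℝ) ≤ h := by
    have h1 : Real.exp 40 ≤ Real.exp h := le_trans (le_max_left _ _) hmax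
    exact (Real.exp_le_exp.mp h1)
  have hhpos : 0 < h := by linarith
  set ε := Real.exp (-(3/5 * h)) with hε
  have hεpos : 0 < ε := Real.exp_pos _
  have hε18 : ε ≤ 1/8 := by
    have h1 : Real.exp (-(3/5 * h)) ≤ Real.exp (-4) := by
      apply Real.exp_le_exp.mpr; linarith
    have h2 : Real.exp (-4) ≤ 1/40 := by
      rw [Real.exp_neg]
      rw [inv_le_iff_one_le_mul₀ (Real.exp_pos _)]
      nlinarith [exp_four_ge]
    linarith
  set m := ⌊Real.exp (h/2)⌋₊ with hm
  have hm_le : (m:ℝ) ≤ Real.exp (h/2) := Nat.floor_le (Real.exp_pos _).le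
  have hm_gt : Real.exp (h/2) < (m:ℝ) + 1 := Nat.lt_floor_add_one _
  set w : ℕ × ℕ → ℂ := fun p => ((5*ε : ℝ):ℂ) * ((p.1:ℂ) + (p.2:ℂ) * Complex.I) with hwdef
  set grid : Finset (ℕ × ℕ) := Finset.range (m+1) ×ˢ Finset.range (m+1) with hgrid
  set R := 10 * Real.exp (-(h/10)) with hR
  have hRε : ε * Real.exp (h/2) = Real.exp (-(h/10)) := by
    rw [hε, ← Real.exp_add]; congr 1; ring
  have hR14 : R ≤ 1/4 := by
    have h1 : Real.exp (-(h/10)) ≤ Real.exp (-4) := by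
      apply Real.exp_le_exp.mpr; linarith
    have h2 : Real.exp (-4) ≤ 1/40 := by
      rw [Real.exp_neg, inv_le_iff_one_le_mul₀ (Real.exp_pos _)]
      nlinarith [exp_four_ge]
    rw [hR]; nlinarith
  have hwbound : ∀ p ∈ grid, ‖(w p)‖ ≤ R := by
    intro p hp
    rw [hgrid, Finset.mem_product, Finset.mem_range, Finset.mem_range] at hp
    have hp1 : (p.1:ℝ) ≤ m := by exact_mod_cast Nat.lt_succ_iff.mp hp.1
    have hp2 : (p.2:ℝ) ≤ m := by exact_mod_cast Nat.lt_succ_iff.mp hp.2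
    have habs : ‖(w p)‖ = (5*ε) * ‖((p.1:ℂ) + (p.2:ℂ) * Complex.I)‖ := by
      rw [hwdef]
      rw [norm_mul, Complex.norm_real, Real.norm_eq_abs, _root_.abs_of_nonneg (by positivity : (0:ℝ) ≤ 5*ε)]
    have hre : ((p.1:ℂ) + (p.2:ℂ) * Complex.I).re = (p.1:ℝ) := by simp
    have him : ((p.1:ℂ) + (p.2:ℂ) * Complex.I).im = (p.2:ℝ) := by simp
    have h2 : ‖((p.1:ℂ) + (p.2:ℂ) * Complex.I)‖ ≤ (p.1:ℝ) + (p.2:ℝ) := by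
      have := Complex.norm_le_abs_re_add_abs_im ((p.1:ℂ) + (p.2:ℂ) * Complex.I)
      rw [hre, him] at this
      simpa [abs_of_nonneg (Nat.cast_nonneg p.1 : (0:ℝ) ≤ p.1), abs_of_nonneg (Nat.cast_nonneg p.2 : (0:ℝ) ≤ p.2)] using this
    calc ‖(w p)‖ = (5*ε) * ‖((p.1:ℂ) + (p.2:ℂ) * Complex.I)‖ := habs
      _ ≤ (5*ε) * ((p.1:ℝ) + (p.2:ℝ)) := by
          apply mul_le_mul_of_nonneg_left h2 (by positivity)
      _ ≤ (5*ε) * (2*(m:ℝ)) := by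
          apply mul_le_mul_of_nonneg_left (by linarith) (by positivity)
      _ ≤ 10 * (ε * Real.exp (h/2)) := by nlinarith
      _ = R := by rw [hRε, hR]
  -- μ coordinates
  set μ : ℕ → ℂ := fun k => (Λ k - z) / (1 - (starRingEnd ℂ) z * Λ k) with hμdef
  have hμlt : ∀ k, ‖(μ k)‖ < 1 := fun k => mu_abs_lt hz1 (hΛ1 k)
  have hμpd : ∀ k, ‖(μ k)‖ = pd (Λ k) z := by
    intro k
    rw [hμdef, pd, norm_div, abs_one_sub_comm]
  have hmobμ : ∀ k, mob z (μ k) = Λ k := fun k => mob_inv hz1 (hΛ1 k)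
  -- finiteness of T
  set T : Set ℕ := {k | pd (Λ k) z ≤ 1/2} with hT
  set δ := (3/8) * (1 - ‖z‖)^2 with hδ
  have hδpos : 0 < δ := by
    have h0 : 0 < 1 - ‖z‖ := by linarith
    rw [hδ]; positivity
  have hTsub : ∀ k ∈ T, δ ≤ 1 - ‖(Λ k)‖ := by
    intro k hk
    rw [hT, Set.mem_setOf_eq] at hk
    set L := ‖(Λ k)‖ with hL
    set t := ‖z‖ with ht
    set B := ‖(1 - (starRingEnd ℂ) (Λ k) * z)‖ with hB
    have hBpos : 0 < B := norm_pos_iff.mpr (one_sub_ne (hΛ1 k) hz1)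
    have h1 : ‖(Λ k - z)‖ ≤ B/2 := by
      rw [pd] at hk
      rw [div_le_iff₀ hBpos] at hk
      linarith
    have hkey := key_id (Λ k) z
    have hns1 : Complex.normSq (1 - (starRingEnd ℂ) (Λ k) * z) = B^2 := by
      rw [← Complex.sq_norm]
    have hns2 : Complex.normSq (Λ k - z) = (‖(Λ k - z)‖)^2 := by
      rw [← Complex.sq_norm]
    have hns3 : Complex.normSq (Λ k) = L^2 := by rw [← Complex.sq_norm]
    have hns4 : Complex.normSq z = t^2 := by rw [← Complex.sq_norm]
    rw [hns1, hns2, hns3, hns4] at hkey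
    have hBlow : 1 - t ≤ B := by
      have h2 : ‖((starRingEnd ℂ) (Λ k) * z)‖ = L * t := by
        rw [norm_mul, Complex.norm_conj]
      have := abs_one_sub_ge (x := (starRingEnd ℂ) (Λ k) * z)
      rw [h2] at this
      have hLt : L * t ≤ t := by
        nlinarith [norm_nonneg z, (hΛ1 k).le]
      linarith
    have ht0 : 0 ≤ t := norm_nonneg z
    have ht1 : t < 1 := hz1
    have hL0 : 0 ≤ L := norm_nonneg (Λ k)
    have hL1 : L < 1 := hΛ1 k
    have hAsq : (‖(Λ k - z)‖)^2 ≤ B^2/4 := by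
      have h2 := pow_le_pow_left₀ (norm_nonneg (Λ k - z)) h1 2
      have h3 : (B/2)^2 = B^2/4 := by ring
      linarith
    have hB2 : (1-t)^2 ≤ B^2 := pow_le_pow_left₀ (by linarith) hBlow 2
    have hstep : (3/4) * B^2 ≤ (1 - L^2) * (1 - t^2) := by linarith
    have hstep2 : (1 - L^2) * (1 - t^2) ≤ 2*(1-L) := by
      nlinarith [mul_nonneg (mul_nonneg (by linarith : (0:ℝ) ≤ 1-L) (by linarith : (0:ℝ) ≤ 1+L)) (sq_nonneg t), sq_nonneg (1-L)]
    rw [hδ]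
    linarith
  have hTfin : T.Finite := by
    have htend : Filter.Tendsto (fun k => 1 - ‖(Λ k)‖) Filter.cofinite (nhds 0) :=
      hsum.tendsto_cofinite_zero
    have hev : ∀ᶠ k in Filter.cofinite, (1 - ‖(Λ k)‖) < δ :=
      htend.eventually_lt_const hδpos
    have hfin := Filter.eventually_cofinite.mp hev
    apply hfin.subset
    intro k hk
    exact not_lt.2 (hTsub k hk)
  set T' := hTfin.toFinset with hT'
  have hTcard : (T'.card : ℝ) ≤ Real.exp h := by
    have h1 : T.ncard = T'.card := Set.ncard_eq_toFinset_card T hTfin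
    have h2 : (T.ncard : ℝ) ≤ Real.exp h := le_trans (le_max_right _ _) hmax
    rw [← h1]; exact h2
  have hcard : T'.card < grid.card := by
    have hg : grid.card = (m+1) * (m+1) := by
      rw [hgrid, Finset.card_product, Finset.card_range]
    have h1 : Real.exp h < ((m:ℝ)+1) * ((m:ℝ)+1) := by
      have : Real.exp h = Real.exp (h/2) * Real.exp (h/2) := by
        rw [← Real.exp_add]; congr 1; ring
      rw [this]
      have he : 0 < Real.exp (h/2) := Real.exp_pos _
      nlinarith
    have h2 : (T'.card : ℝ) < ((m+1) * (m+1) : ℕ) := by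
      push_cast; nlinarith [hTcard]
    rw [hg]; exact_mod_cast h2
  -- blocking estimate: if pd (w p) (μ k) < ε then w p is within 2ε of μ k
  have hblock : ∀ p ∈ grid, ∀ k, pd (w p) (μ k) < ε → ‖(w p - μ k)‖ ≤ 2*ε := by
    intro p hp k hlt
    have hwp1 : ‖(w p)‖ < 1 := lt_of_le_of_lt (hwbound p hp) (by linarith)
    have hden_pos : 0 < ‖(1 - (starRingEnd ℂ) (w p) * μ k)‖ :=
      norm_pos_iff.mpr (one_sub_ne hwp1 (hμlt k))
    rw [pd, div_lt_iff₀ hden_pos] at hlt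
    have hden_le : ‖(1 - (starRingEnd ℂ) (w p) * μ k)‖ ≤ 2 := by
      have h1 := abs_one_sub_le (x := (starRingEnd ℂ) (w p) * μ k)
      have h2 : ‖((starRingEnd ℂ) (w p) * μ k)‖ ≤ 1 := by
        rw [norm_mul, Complex.norm_conj]
        calc ‖(w p)‖ * ‖(μ k)‖ ≤ 1 * 1 :=
          mul_le_mul hwp1.le (hμlt k).le (norm_nonneg _) zero_le_one
        _ = 1 := by norm_num
      linarith
    nlinarith [norm_nonneg (w p - μ k)]
  -- separation of distinct grid points
  have hsep : ∀ p ∈ grid, ∀ q ∈ grid, p ≠ q → 5*ε ≤ ‖(w p - w q)‖ := by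
    intro p _ q _ hpq
    set A := ((p.1:ℝ) - (q.1:ℝ)) with hA
    set B := ((p.2:ℝ) - (q.2:ℝ)) with hB2
    set D : ℂ := (A:ℂ) + (B:ℂ) * Complex.I with hD
    have hwd : w p - w q = ((5*ε:ℝ):ℂ) * D := by
      rw [hwdef, hD, hA, hB2]
      push_cast
      ring
    have hDre : D.re = A := by simp [hD]
    have hDim : D.im = B := by simp [hD]
    have hD1 : (1:ℝ) ≤ ‖D‖ := by
      rcases Prod.mk.injEq p.1 p.2 q.1 q.2 ▸ (fun hh => hpq (Prod.ext_iff.mpr hh)) with _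
      by_cases h1 : p.1 = q.1
      · have h2 : p.2 ≠ q.2 := fun hc => hpq (Prod.ext_iff.mpr ⟨h1, hc⟩)
        calc (1:ℝ) ≤ |B| := nat_cast_dist h2
          _ = |D.im| := by rw [hDim]
          _ ≤ ‖D‖ := Complex.abs_im_le_norm D
      · calc (1:ℝ) ≤ |A| := nat_cast_dist h1
          _ = |D.re| := by rw [hDre]
          _ ≤ ‖D‖ := Complex.abs_re_le_norm D
    calc 5*ε = (5*ε) * 1 := by ring
      _ ≤ (5*ε) * ‖D‖ := by
          apply mul_le_mul_of_nonneg_left hD1 (by positivity)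
      _ = ‖(w p - w q)‖ := by
          rw [hwd, norm_mul, Complex.norm_real, Real.norm_eq_abs, _root_.abs_of_nonneg (by positivity : (0:ℝ) ≤ 5*ε)]
  -- pigeonhole
  have hpigeon : ∃ p ∈ grid, ∀ k ∈ T', ε ≤ pd (w p) (μ k) := by
    by_contra hcon
    push_neg at hcon
    have hcon' : ∀ p : ℕ × ℕ, ∃ k : ℕ, p ∈ grid → (k ∈ T' ∧ pd (w p) (μ k) < ε) := by
      intro p
      by_cases hp : p ∈ grid
      · obtain ⟨k, hk1, hk2⟩ := hcon p hp
        exact ⟨k, fun _ => ⟨hk1, hk2⟩⟩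
      · exact ⟨0, fun hh => absurd hh hp⟩
    choose f hf using hcon'
    obtain ⟨p, hp, q, hq, hpq, hfeq⟩ := Finset.exists_ne_map_eq_of_card_lt_of_maps_to
      hcard (fun p hp => (hf p hp).1)
    have h1 : ‖(w p - μ (f p))‖ ≤ 2*ε := hblock p hp _ (hf p hp).2
    have h2 : ‖(w q - μ (f p))‖ ≤ 2*ε := by
      rw [hfeq]; exact hblock q hq _ (hf q hq).2
    have h3 : ‖(w p - w q)‖ ≤ 4*ε := by
      have := norm_sub_le_norm_sub_add_norm_sub (w p) (μ (f p)) (w q)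
      have h4 : ‖(μ (f p) - w q)‖ = ‖(w q - μ (f p))‖ := by
        rw [← norm_neg]; congr 1; ring
      rw [h4] at this
      linarith
    have h5 := hsep p hp q hq hpq
    linarith
  obtain ⟨p, hp, hgood⟩ := hpigeon
  set ω := w p with hω
  have hωR : ‖ω‖ ≤ R := hwbound p hp
  have hω14 : ‖ω‖ ≤ 1/4 := le_trans hωR hR14
  have hωlt : ‖ω‖ < 1 := lt_of_le_of_lt hω14 (by norm_num)
  -- Harnack
  have hpos' : ∀ ζ ∈ Metric.ball (0:ℂ) 1, 0 < (F ζ).re := by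
    intro ζ hζ
    rw [← hFre ζ hζ]
    exact hHpos ζ hζ
  have hhar := harnack hFd hpos' hz1 hωlt
  have hztball : mob z ω ∈ Metric.ball (0:ℂ) 1 := by
    simpa [Metric.mem_ball, Complex.dist_eq] using mob_abs_lt hz1 hωlt
  have hHzt : (3/5) * h ≤ H (mob z ω) := by
    have e1 : (F z).re = h := (hFre z hz).symm
    have e2 : (F (mob z ω)).re = H (mob z ω) := (hFre _ hztball).symm
    rw [e1, e2] at hhar
    have hHztpos : 0 < H (mob z ω) := hHpos _ hztball
    have hρ0 : 0 ≤ ‖ω‖ := norm_nonneg ω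
    nlinarith [hhar, hω14, hHztpos, hhpos]
  have hεzt : Real.exp (-H (mob z ω)) ≤ ε := by
    rw [hε]
    apply Real.exp_le_exp.mpr
    linarith
  refine ⟨mob z ω, hztball, ?_, ?_⟩
  · -- lower bound on pd to each Λ k
    intro k
    have hpdeq : pd (mob z ω) (Λ k) = pd ω (μ k) := by
      rw [← hmobμ k, pd_mob hz1 hωlt (hμlt k)]
    rw [hpdeq]
    refine le_trans hεzt ?_
    by_cases hkT : k ∈ T'
    · exact hgood k hkT
    · -- far case
      have hknot : ¬ pd (Λ k) z ≤ 1/2 := by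
        intro hc
        exact hkT (hTfin.mem_toFinset.mpr hc)
      have hμbig : 1/2 < ‖(μ k)‖ := by
        rw [hμpd k]; linarith [not_le.mp hknot]
      have hnum : 1/4 ≤ ‖(ω - μ k)‖ := by
        have := norm_sub_norm_le (μ k) ω
        have h4 : ‖(μ k - ω)‖ = ‖(ω - μ k)‖ := by
          rw [← norm_neg]; congr 1; ring
        rw [h4] at this
        linarith
      have hden : ‖(1 - (starRingEnd ℂ) ω * μ k)‖ ≤ 2 := by
        have h1 := abs_one_sub_le (x := (starRingEnd ℂ) ω * μ k)
        have h2 : ‖((starRingEnd ℂ) ω * μ k)‖ ≤ 1 := by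
          rw [norm_mul, Complex.norm_conj]
          calc ‖ω‖ * ‖(μ k)‖ ≤ 1 * 1 :=
            mul_le_mul hωlt.le (hμlt k).le (norm_nonneg _) zero_le_one
          _ = 1 := by norm_num
        linarith
      have hdenpos : 0 < ‖(1 - (starRingEnd ℂ) ω * μ k)‖ :=
        norm_pos_iff.mpr (one_sub_ne hωlt (hμlt k))
      rw [pd, le_div_iff₀ hdenpos]
      nlinarith
  · -- distance to z
    have hpdz : pd (mob z ω) z = ‖ω‖ := by
      have h0 : pd (mob z ω) (mob z 0) = pd ω 0 :=
        pd_mob hz1 hωlt (by simp : ‖(0:ℂ)‖ < 1)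
      rw [mob_zero] at h0
      rw [h0, pd]
      simp
    rw [hpdz]
    -- |ω| ≤ R = 10 exp(-h/10) ≤ exp(-h/exp 40)
    have hc400 : (400:ℝ) ≤ Real.exp 40 := exp_forty_ge
    have hcpos : (0:ℝ) < Real.exp 40 := Real.exp_pos _
    have ht1 : h / Real.exp 40 ≤ h / 400 :=
      div_le_div_of_nonneg_left hhpos.le (by norm_num) hc400
    have ht2 : (3:ℝ) ≤ h/10 - h/Real.exp 40 := by
      have : h/10 - h/400 = h * (39/400) := by ring
      nlinarith
    have h10 : (10:ℝ) ≤ Real.exp (h/10 - h/Real.exp 40) :=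
      le_trans exp_three_ge (Real.exp_le_exp.mpr ht2)
    have hfinal : R ≤ Real.exp (-h / Real.exp 40) := by
      rw [hR]
      have : Real.exp (h/10 - h/Real.exp 40) * Real.exp (-(h/10)) = Real.exp (-h/Real.exp 40) := by
        rw [← Real.exp_add]; congr 1; ring
      calc 10 * Real.exp (-(h/10)) ≤ Real.exp (h/10 - h/Real.exp 40) * Real.exp (-(h/10)) :=
            mul_le_mul_of_nonneg_right h10 (Real.exp_pos _).le
        _ = Real.exp (-h/Real.exp 40) := this
    exact le_trans hωR hfinal
end

section
/- Let H₁, H₂ be positive harmonic functions on the unit disc with limsup_{|z|→1} H₁(z)/H₂(z) = ∞. Then there exists a sequence of points {a_j} in 𝔻 with ρ(a_j,a_k) ≥ 1/2 for j ≠ k, such that H₁(a_j)/H₂(a_j) → ∞, (1−|a_j|)·H₂(a_j) → 0, and there exist positive integers N_j with N_j·(1−|a_j|)·H₂(a_j) → 0, N_j·(1−|a_j|)·H₁(a_j) → ∞, and Σ_j N_j·(1−|a_j|)·H₂(a_j) < ∞. -/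
open Complex Filter

lemma harnack_disc (H : ℂ → ℝ)
    (hH : (∃ F : ℂ → ℂ, DifferentiableOn ℂ F (Metric.ball (0:ℂ) 1) ∧
      ∀ z ∈ Metric.ball (0:ℂ) 1, H z = (F z).re) ∧
    ∀ z ∈ Metric.ball (0:ℂ) 1, 0 < H z) :
    ∀ z ∈ Metric.ball (0:ℂ) 1, (1 - ‖z‖) * H z ≤ 2 * H 0 := by
  obtain ⟨⟨F, hF, hRe⟩, hpos⟩ := hH
  have h0mem : (0:ℂ) ∈ Metric.ball (0:ℂ) 1 := by simp
  set F' : ℂ → ℂ := fun z => F z - ((F 0).im : ℂ) * Complex.I with hF'def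
  have hF' : DifferentiableOn ℂ F' (Metric.ball (0:ℂ) 1) := hF.sub (differentiableOn_const _)
  have hRe' : ∀ z ∈ Metric.ball (0:ℂ) 1, H z = (F' z).re := by
    intro z hz
    simp [hF'def, Complex.sub_re, Complex.mul_re, hRe z hz]
  set u₀ : ℝ := H 0 with hu₀def
  have hu₀ : 0 < u₀ := hpos 0 h0mem
  have hF'0 : F' 0 = (u₀ : ℂ) := by
    have : H 0 = (F 0).re := hRe 0 h0mem
    simp [hF'def, Complex.ext_iff, hu₀def, this]
  set g : ℂ → ℂ := fun z => (F' z - (u₀:ℂ)) / (F' z + (u₀:ℂ)) with hgdef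
  have habs : ∀ z ∈ Metric.ball (0:ℂ) 1,
      ‖F' z - (u₀:ℂ)‖ < ‖F' z + (u₀:ℂ)‖ := by
    intro z hz
    have hw : 0 < (F' z).re := by rw [← hRe' z hz]; exact hpos z hz
    have key : Complex.normSq (F' z - (u₀:ℂ)) < Complex.normSq (F' z + (u₀:ℂ)) := by
      simp only [Complex.normSq_apply, Complex.sub_re, Complex.sub_im, Complex.add_re,
        Complex.add_im, Complex.ofReal_re, Complex.ofReal_im]
      nlinarith
    rw [Complex.norm_def, Complex.norm_def]
    exact Real.sqrt_lt_sqrt (Complex.normSq_nonneg _) key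
  have hden : ∀ z ∈ Metric.ball (0:ℂ) 1, F' z + (u₀:ℂ) ≠ 0 := by
    intro z hz h
    have := habs z hz
    rw [h] at this; simp at this
    have h2 : (0:ℝ) ≤ ‖F' z - (u₀:ℂ)‖ := norm_nonneg _
    linarith
  have hgdiff : DifferentiableOn ℂ g (Metric.ball (0:ℂ) 1) :=
    (hF'.sub (differentiableOn_const _)).div (hF'.add (differentiableOn_const _)) hden
  have hgmaps : Set.MapsTo g (Metric.ball (0:ℂ) 1) (Metric.ball (0:ℂ) 1) := by
    intro z hz
    rw [mem_ball_zero_iff, hgdef]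
    simp only [norm_div]
    rw [div_lt_one (lt_of_le_of_lt (norm_nonneg _) (habs z hz))]
    exact habs z hz
  have hg0 : g 0 = 0 := by simp [hgdef, hF'0]
  -- Schwarz lemma
  have hSchwarz : ∀ z ∈ Metric.ball (0:ℂ) 1, ‖g z‖ ≤ ‖z‖ := by
    intro z hz
    exact Complex.norm_le_norm_of_mapsTo_ball_self hgdiff (hgmaps.mono_right Metric.ball_subset_closedBall) hg0 (mem_ball_zero_iff.1 hz)
  intro z hz
  have hr : ‖z‖ < 1 := mem_ball_zero_iff.1 hz
  have hq : ‖g z‖ ≤ ‖z‖ := hSchwarz z hz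
  -- F' z * (1 - g z) = u₀ * (1 + g z)
  have hiden : F' z * (1 - g z) = (u₀:ℂ) * (1 + g z) := by
    have h := hden z hz
    rw [hgdef]
    field_simp
    ring
  have hab : ‖F' z‖ * ‖1 - g z‖ = u₀ * ‖1 + g z‖ := by
    have := congrArg norm hiden
    rwa [norm_mul, norm_mul, Complex.norm_real, Real.norm_eq_abs, abs_of_pos hu₀] at this
  have h1g : 1 - ‖z‖ ≤ ‖1 - g z‖ := by
    calc 1 - ‖z‖ ≤ 1 - ‖g z‖ := by linarith
    _ = ‖(1:ℂ)‖ - ‖g z‖ := by simp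
    _ ≤ ‖1 - g z‖ := by
        have := norm_sub_norm_le (1:ℂ) (g z)
        simpa using this
  have h2g : ‖1 + g z‖ ≤ 1 + ‖z‖ := by
    calc ‖1 + g z‖ ≤ ‖(1:ℂ)‖ + ‖g z‖ := norm_add_le _ _
    _ ≤ 1 + ‖z‖ := by simp; linarith
  have hHle : H z ≤ ‖F' z‖ := by
    rw [hRe' z hz]
    exact Complex.re_le_norm _
  have hstep : (1 - ‖z‖) * ‖F' z‖ ≤ u₀ * (1 + ‖z‖) := by
    calc (1 - ‖z‖) * ‖F' z‖
        ≤ ‖1 - g z‖ * ‖F' z‖ := by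
          apply mul_le_mul_of_nonneg_right h1g (norm_nonneg _)
    _ = u₀ * ‖1 + g z‖ := by rw [mul_comm]; exact hab
    _ ≤ u₀ * (1 + ‖z‖) := by
          apply mul_le_mul_of_nonneg_left h2g hu₀.le
  have hza : 0 ≤ ‖z‖ := norm_nonneg _
  nlinarith [mul_le_mul_of_nonneg_left hHle (by linarith : (0:ℝ) ≤ 1 - ‖z‖)]

lemma pd_symm (a b : ℂ) : pd a b = pd b a := by
  unfold pd
  rw [← Complex.norm_conj (1 - (starRingEnd ℂ) a * b)]
  congr 1
  · exact norm_sub_rev _ _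
  · congr 1
    simp only [map_sub, map_mul, Complex.conj_conj, map_one]
    ring

lemma pd_lower (a b : ℂ) (ha : ‖a‖ < 1) (hb : ‖b‖ < 1)
    (hab : ‖a‖ ≤ ‖b‖) :
    (‖b‖ - ‖a‖) / (1 - ‖a‖ * ‖b‖) ≤ pd a b := by
  set r := ‖a‖ with hr
  set s := ‖b‖ with hs
  set A := ‖a - b‖ with hA
  set B := ‖1 - (starRingEnd ℂ) a * b‖ with hB
  set t := ((starRingEnd ℂ) a * b).re with ht
  have hr0 : 0 ≤ r := norm_nonneg _
  have hs0 : 0 ≤ s := norm_nonneg _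
  have hrs : 1 - r * s > 0 := by nlinarith
  have htle : t ≤ r * s := by
    have h1 : t ≤ ‖(starRingEnd ℂ) a * b‖ := Complex.re_le_norm _
    rwa [norm_mul, Complex.norm_conj] at h1
  have hA2 : A ^ 2 = r ^ 2 + s ^ 2 - 2 * t := by
    rw [hA, hr, hs, ht, Complex.sq_norm, Complex.sq_norm, Complex.sq_norm]
    simp only [Complex.normSq_apply, Complex.sub_re, Complex.sub_im, Complex.mul_re,
      Complex.mul_im, Complex.conj_re, Complex.conj_im]
    ring
  have hB2 : B ^ 2 = 1 - 2 * t + r ^ 2 * s ^ 2 := by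
    rw [hB, hr, hs, ht, Complex.sq_norm, Complex.sq_norm, Complex.sq_norm]
    simp only [Complex.normSq_apply, Complex.sub_re, Complex.sub_im, Complex.mul_re,
      Complex.mul_im, Complex.conj_re, Complex.conj_im, Complex.one_re, Complex.one_im]
    ring
  have hA0 : 0 ≤ A := norm_nonneg _
  have hB0 : 0 ≤ B := norm_nonneg _
  have hBpos : 0 < B := by nlinarith
  have hfac : 0 ≤ 2 * (r * s - t) * ((1 - s) * (1 + r)) * ((1 + s) * (1 - r)) := by
    apply mul_nonneg
    apply mul_nonneg
    · nlinarith
    · nlinarith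
    · nlinarith
  have hsq : ((s - r) * B) ^ 2 ≤ (A * (1 - r * s)) ^ 2 := by
    have : (s - r) ^ 2 * B ^ 2 ≤ A ^ 2 * (1 - r * s) ^ 2 := by
      rw [hA2, hB2]; nlinarith [hfac]
    calc ((s - r) * B) ^ 2 = (s - r) ^ 2 * B ^ 2 := by ring
    _ ≤ A ^ 2 * (1 - r * s) ^ 2 := this
    _ = (A * (1 - r * s)) ^ 2 := by ring
  have hkey : (s - r) * B ≤ A * (1 - r * s) := by
    have h1 : 0 ≤ (s - r) * B := mul_nonneg (by linarith) hB0
    have h2 : 0 ≤ A * (1 - r * s) := mul_nonneg hA0 hrs.le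
    exact (pow_le_pow_iff_left₀ h1 h2 two_ne_zero).1 hsq
  rw [pd, ← hA, ← hB, div_le_div_iff₀ hrs hBpos]
  exact hkey

/-- auxiliary growth function -/
noncomputable def stmtGf (r : ℝ) : ℝ := (2 * r + 1) / (2 + r)

lemma stmtGf_lt_one {r : ℝ} (h0 : 0 ≤ r) (h1 : r < 1) : stmtGf r < 1 := by
  rw [stmtGf, div_lt_one (by linarith)]; linarith

lemma stmtGf_ge {r : ℝ} (h0 : 0 ≤ r) (h1 : r < 1) : r ≤ stmtGf r := by
  rw [stmtGf, le_div_iff₀ (by linarith)]; nlinarith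

/-- auxiliary threshold -/
noncomputable def stmtT (C : ℝ) (j : ℕ) : ℝ := ((j:ℝ) + 4 * C + 1) * 2 ^ j

lemma stmtT_ge {C : ℝ} (hC : 0 < C) (j : ℕ) : (j:ℝ) + 1 ≤ stmtT C j := by
  rw [stmtT]
  have h2 : (1:ℝ) ≤ 2 ^ j := one_le_pow₀ (by norm_num)
  nlinarith [Nat.cast_nonneg (α := ℝ) j]

lemma stmtT_pos {C : ℝ} (hC : 0 < C) (j : ℕ) : 0 < stmtT C j :=
  lt_of_lt_of_le (by positivity) (stmtT_ge hC j)


lemma stmt_aux {s h1 h2 C Tv : ℝ} (j : ℕ) (hs0 : 0 ≤ s) (hs1 : s < 1)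
    (h1p : 0 < h1) (h2p : 0 < h2) (hC : 0 < C)
    (hhar : (1 - s) * h1 ≤ 2 * C) (hT : Tv < h1 / h2)
    (hTv : stmtT C j ≤ Tv) :
    (j:ℝ) ≤ ((⌈(j:ℝ) / ((1 - s) * h1)⌉₊ + 1 : ℕ) : ℝ) * ((1 - s) * h1) ∧
    ((⌈(j:ℝ) / ((1 - s) * h1)⌉₊ + 1 : ℕ) : ℝ) * ((1 - s) * h2) ≤ (1/2:ℝ)^j := by
  have hs' : (0:ℝ) < 1 - s := by linarith
  have hx1p : 0 < (1 - s) * h1 := mul_pos hs' h1p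
  have hx2p : 0 < (1 - s) * h2 := mul_pos hs' h2p
  have hR : 0 < h1 / h2 := div_pos h1p h2p
  have hTp : 0 < stmtT C j := stmtT_pos hC j
  have hTg : (j:ℝ) + 1 ≤ stmtT C j := stmtT_ge hC j
  have hceil_low : (j:ℝ) / ((1 - s) * h1) ≤ (⌈(j:ℝ) / ((1 - s) * h1)⌉₊ : ℝ) := Nat.le_ceil _
  have hceil_up : (⌈(j:ℝ) / ((1 - s) * h1)⌉₊ : ℝ) < (j:ℝ) / ((1 - s) * h1) + 1 :=
    Nat.ceil_lt_add_one (by positivity)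
  have hn : ((⌈(j:ℝ) / ((1 - s) * h1)⌉₊ + 1 : ℕ) : ℝ)
      = (⌈(j:ℝ) / ((1 - s) * h1)⌉₊ : ℝ) + 1 := by push_cast; ring
  constructor
  · rw [hn]
    have hj1 : (j:ℝ) / ((1 - s) * h1) ≤ (⌈(j:ℝ) / ((1 - s) * h1)⌉₊ : ℝ) + 1 := by linarith
    calc (j:ℝ) = ((j:ℝ) / ((1 - s) * h1)) * ((1 - s) * h1) := by field_simp
    _ ≤ ((⌈(j:ℝ) / ((1 - s) * h1)⌉₊ : ℝ) + 1) * ((1 - s) * h1) :=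
        mul_le_mul_of_nonneg_right hj1 hx1p.le
  · rw [hn]
    have hup : (⌈(j:ℝ) / ((1 - s) * h1)⌉₊ : ℝ) + 1 ≤ (j:ℝ) / ((1 - s) * h1) + 2 := by linarith
    have h2le : ((⌈(j:ℝ) / ((1 - s) * h1)⌉₊ : ℝ) + 1) * ((1 - s) * h2)
        ≤ ((j:ℝ) / ((1 - s) * h1) + 2) * ((1 - s) * h2) :=
      mul_le_mul_of_nonneg_right hup hx2p.le
    have h5 : ((j:ℝ) / ((1 - s) * h1) + 2) * ((1 - s) * h2)
        = ((j:ℝ) + 2 * ((1 - s) * h1)) / (h1 / h2) := by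
      field_simp
    have h6 : ((j:ℝ) + 2 * ((1 - s) * h1)) / (h1 / h2) ≤ ((j:ℝ) + 4 * C) / stmtT C j := by
      apply div_le_div₀
      · have := Nat.cast_nonneg (α := ℝ) j
        linarith
      · linarith
      · exact hTp
      · linarith
    have h7 : ((j:ℝ) + 4 * C) / stmtT C j ≤ (1/2:ℝ)^j := by
      rw [div_le_iff₀ hTp, stmtT]
      have hkey : (1/2:ℝ)^j * (((j:ℝ) + 4 * C + 1) * 2^j) = (j:ℝ) + 4 * C + 1 := by
        have h' : (1/2:ℝ)^j * 2^j = 1 := by rw [← mul_pow]; norm_num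
        calc (1/2:ℝ)^j * (((j:ℝ) + 4 * C + 1) * 2^j)
            = ((j:ℝ) + 4 * C + 1) * ((1/2:ℝ)^j * 2^j) := by ring
        _ = (j:ℝ) + 4 * C + 1 := by rw [h']; ring
      linarith
    linarith

/-- The point-selection step in the proof of Theorem 1.4(a) of the paper. -/
theorem stmt_19 (H₁ H₂ : ℂ → ℝ)
    (hH₁ : IsPosHarmonicDisc H₁) (hH₂ : IsPosHarmonicDisc H₂)
    (hlimsup : ∀ T : ℝ, ∀ r : ℝ, r < 1 →
      ∃ z ∈ Metric.ball (0:ℂ) 1, r < ‖z‖ ∧ T < H₁ z / H₂ z) :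
    ∃ (a : ℕ → ℂ) (N : ℕ → ℕ),
      (∀ j, a j ∈ Metric.ball (0:ℂ) 1) ∧
      (∀ i j, i ≠ j → (1:ℝ)/2 ≤ pd (a i) (a j)) ∧
      Tendsto (fun j => H₁ (a j) / H₂ (a j)) atTop atTop ∧
      Tendsto (fun j => (1 - ‖a j‖) * H₂ (a j)) atTop (nhds 0) ∧
      (∀ j, 0 < N j) ∧
      Tendsto (fun j => (N j : ℝ) * (1 - ‖a j‖) * H₂ (a j)) atTop (nhds 0) ∧
      Tendsto (fun j => (N j : ℝ) * (1 - ‖a j‖) * H₁ (a j)) atTop atTop ∧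
      Summable (fun j => (N j : ℝ) * (1 - ‖a j‖) * H₂ (a j)) := by
  have h0mem : (0:ℂ) ∈ Metric.ball (0:ℂ) 1 := by simp
  have hC : 0 < H₁ 0 := hH₁.2 0 h0mem
  have hHar := harnack_disc H₁ hH₁
  -- choose next-point function
  have hex : ∀ p : ℂ, ∀ j : ℕ, ∃ z : ℂ, ‖p‖ < 1 →
      (z ∈ Metric.ball (0:ℂ) 1 ∧ stmtGf (‖p‖) < ‖z‖ ∧
        stmtT (H₁ 0) j < H₁ z / H₂ z) := by
    intro p j
    by_cases hp : ‖p‖ < 1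
    · have := stmtGf_lt_one (norm_nonneg p) hp
      obtain ⟨z, hz, h1, h2⟩ := hlimsup (stmtT (H₁ 0) j) (stmtGf (‖p‖)) this
      exact ⟨z, fun _ => ⟨hz, h1, h2⟩⟩
    · exact ⟨0, fun h => absurd h hp⟩
  choose nxt hnxt using hex
  obtain ⟨a, ha0, hasucc⟩ : ∃ a : ℕ → ℂ, a 0 = nxt 0 0 ∧ ∀ k, a (k + 1) = nxt (a k) (k + 1) :=
    ⟨fun j => Nat.rec (nxt 0 0) (fun k prev => nxt prev (k + 1)) j, rfl, fun _ => rfl⟩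
  have key : ∀ j, a j ∈ Metric.ball (0:ℂ) 1 ∧ stmtT (H₁ 0) j < H₁ (a j) / H₂ (a j) := by
    intro j
    induction j with
    | zero =>
      have := hnxt 0 0 (by simp)
      rw [ha0]
      exact ⟨this.1, this.2.2⟩
    | succ k ih =>
      have hk : ‖a k‖ < 1 := mem_ball_zero_iff.1 ih.1
      have := hnxt (a k) (k + 1) hk
      rw [hasucc k]
      exact ⟨this.1, this.2.2⟩
  have hball : ∀ j, a j ∈ Metric.ball (0:ℂ) 1 := fun j => (key j).1
  have hlt1 : ∀ j, ‖a j‖ < 1 := fun j => mem_ball_zero_iff.1 (hball j)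
  have hstep : ∀ k, stmtGf (‖a k‖) < ‖a (k + 1)‖ := by
    intro k
    have := hnxt (a k) (k + 1) (hlt1 k)
    rw [hasucc k]
    exact this.2.1
  have hmono : Monotone fun k => ‖a k‖ := by
    apply monotone_nat_of_le_succ
    intro k
    exact le_of_lt (lt_of_le_of_lt (stmtGf_ge (norm_nonneg _) (hlt1 k)) (hstep k))
  -- separation
  have hsep' : ∀ i j, i < j → (1:ℝ)/2 ≤ pd (a i) (a j) := by
    intro i j hij
    have hr1 : ‖a i‖ < 1 := hlt1 i
    have hs1 : ‖a j‖ < 1 := hlt1 j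
    have hr0 : 0 ≤ ‖a i‖ := norm_nonneg _
    have hgs : stmtGf (‖a i‖) ≤ ‖a j‖ :=
      le_trans (le_of_lt (hstep i)) (hmono hij)
    have hrs : ‖a i‖ ≤ ‖a j‖ := le_trans (stmtGf_ge hr0 hr1) hgs
    have h1 : (1:ℝ)/2 ≤ (‖a j‖ - ‖a i‖) /
        (1 - ‖a i‖ * ‖a j‖) := by
      rw [stmtGf, div_le_iff₀ (by linarith)] at hgs
      rw [div_le_div_iff₀ (by norm_num) (by nlinarith)]
      nlinarith
    exact le_trans h1 (pd_lower (a i) (a j) hr1 hs1 hrs)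
  have hsep : ∀ i j, i ≠ j → (1:ℝ)/2 ≤ pd (a i) (a j) := by
    intro i j hij
    rcases lt_or_gt_of_ne hij with h | h
    · exact hsep' i j h
    · rw [pd_symm]; exact hsep' j i h
  -- quantitative bounds
  have hH1pos : ∀ j, 0 < H₁ (a j) := fun j => hH₁.2 _ (hball j)
  have hH2pos : ∀ j, 0 < H₂ (a j) := fun j => hH₂.2 _ (hball j)
  have hTj : ∀ j, stmtT (H₁ 0) j < H₁ (a j) / H₂ (a j) := fun j => (key j).2
  set C : ℝ := H₁ 0 with hCdef
  -- the key per-index bound for N j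
  have hmain : ∀ j : ℕ,
      (j:ℝ) ≤ ((⌈(j:ℝ) / ((1 - ‖a j‖) * H₁ (a j))⌉₊ + 1 : ℕ) : ℝ) *
        ((1 - ‖a j‖) * H₁ (a j)) ∧
      ((⌈(j:ℝ) / ((1 - ‖a j‖) * H₁ (a j))⌉₊ + 1 : ℕ) : ℝ) *
        ((1 - ‖a j‖) * H₂ (a j)) ≤ (1/2:ℝ)^j := by
    intro j
    exact stmt_aux j (norm_nonneg _) (hlt1 j) (hH1pos j) (hH2pos j) hC
      (hHar _ (hball j)) (hTj j) le_rfl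
  refine ⟨a, fun j => ⌈(j:ℝ) / ((1 - ‖a j‖) * H₁ (a j))⌉₊ + 1,
    hball, hsep, ?_, ?_, fun j => Nat.succ_pos _, ?_, ?_, ?_⟩
  · -- ratio tends to infinity
    apply tendsto_atTop_mono (f := fun j : ℕ => (j:ℝ))
    · intro j
      exact le_trans (by linarith [stmtT_ge hC j]) (le_of_lt (hTj j))
    · exact tendsto_natCast_atTop_atTop
  · -- x₂ → 0
    apply squeeze_zero (fun j => le_of_lt (mul_pos (by linarith [hlt1 j]) (hH2pos j)))
      (g := fun j : ℕ => 2 * C * (1 / ((j:ℕ) + 1)))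
    · intro j
      have hx1le : (1 - ‖a j‖) * H₁ (a j) ≤ 2 * C := hHar _ (hball j)
      have hR : 0 < H₁ (a j) / H₂ (a j) := div_pos (hH1pos j) (hH2pos j)
      have hT := hTj j
      have hTp := stmtT_pos hC j
      have hTg := stmtT_ge hC j
      have hx2eq : (1 - ‖a j‖) * H₂ (a j)
          = ((1 - ‖a j‖) * H₁ (a j)) / (H₁ (a j) / H₂ (a j)) := by
        field_simp [(hH1pos j).ne', (hH2pos j).ne']
      rw [hx2eq]
      calc ((1 - ‖a j‖) * H₁ (a j)) / (H₁ (a j) / H₂ (a j))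
          ≤ 2 * C / (H₁ (a j) / H₂ (a j)) := by gcongr
      _ ≤ 2 * C / ((j:ℝ) + 1) := by
            gcongr <;> first | positivity | linarith
      _ = 2 * C * (1 / ((j:ℝ) + 1)) := by ring
    · have := tendsto_one_div_add_atTop_nhds_zero_nat (𝕜 := ℝ)
      simpa using this.const_mul (2 * C)
  · -- N j * x₂ → 0
    apply squeeze_zero (g := fun j : ℕ => (1/2:ℝ)^j)
    · intro j
      exact mul_nonneg (mul_nonneg (Nat.cast_nonneg _) (by linarith [hlt1 j])) (hH2pos j).le
    · intro j
      have h := (hmain j).2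
      rw [← mul_assoc] at h
      exact h
    · exact tendsto_pow_atTop_nhds_zero_of_lt_one (by norm_num) (by norm_num)
  · -- N j * x₁ → ∞
    apply tendsto_atTop_mono (f := fun j : ℕ => (j:ℝ))
    · intro j
      have h := (hmain j).1
      rw [← mul_assoc] at h
      exact h
    · exact tendsto_natCast_atTop_atTop
  · -- summable
    refine Summable.of_nonneg_of_le (fun j => ?_) (fun j => ?_) summable_geometric_two
    · exact mul_nonneg (mul_nonneg (Nat.cast_nonneg _) (by linarith [hlt1 j])) (hH2pos j).le
    · have h := (hmain j).2
      rw [← mul_assoc] at h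
      exact h
end
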